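/- arXiv:0809.2773 — 2 statements merged into one kernel-verified Lean document; each statement's English description precedes it below -/
import Mathlib

section
/- If f ∈ L_{q,1,v}, then for every x ∈ ℝ_q^+ the series defining F_{q,v}f(x) converges absolutely; moreover F_{q,v}f(q^n) → 0 as n → −∞, and the limit lim_{n→+∞} F_{q,v}f(q^n) exists (i.e. F_{q,v}f extends continuously to 0). -/
open scoped BigOperators

noncomputable section

/-- The finite q-Pochhammer symbol `(a; q)_n`. -/
def qPoch (a q : ℝ) (n : ℕ) : ℝ := ∏ k ∈ Finset.range n, (1 - a * q ^ k)

/-- The infinite q-Pochhammer symbol `(a; q)_∞`. -/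
def qPochInf (a q : ℝ) : ℝ := ∏' k : ℕ, (1 - a * q ^ k)

/-- The normalized q-Bessel function `j_v(x, q²)`. -/
def jv (q v x : ℝ) : ℝ :=
  ∑' n : ℕ, (-1 : ℝ) ^ n * q ^ (n * (n + 1)) /
    (qPoch (q ^ (2 * v + 2)) (q ^ 2) n * qPoch ((q : ℝ) ^ (2 : ℕ)) (q ^ 2) n) * x ^ (2 * n)

/-- The set `ℝ_q^+ = {q^n : n ∈ ℤ}`. -/
def Rq (q : ℝ) : Set ℝ := {x | ∃ n : ℤ, x = q ^ n}

/-- The q-Jackson integral `∫₀^∞ f(t) d_q t = (1-q) Σ_{n∈ℤ} q^n f(q^n)`. -/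
def jackson (q : ℝ) (f : ℝ → ℝ) : ℝ := (1 - q) * ∑' n : ℤ, q ^ n * f (q ^ n)

/-- Absolute convergence of the defining series of the q-Jackson integral. -/
def JacksonSummable (q : ℝ) (f : ℝ → ℝ) : Prop :=
  Summable fun n : ℤ => q ^ n * |f (q ^ n)|

/-- The constant `c_{q,v}`. -/
def cqv (q v : ℝ) : ℝ :=
  (1 / (1 - q)) * qPochInf (q ^ (2 * v + 2)) (q ^ 2) / qPochInf ((q : ℝ) ^ (2 : ℕ)) (q ^ 2)

/-- Membership in `L_{q,p,v}`: absolute convergence of `∫₀^∞ |f(x)|^p x^{2v+1} d_q x`. -/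
def MemLqpv (q v p : ℝ) (f : ℝ → ℝ) : Prop :=
  JacksonSummable q (fun t => |f t| ^ p * t ^ (2 * v + 1))

/-- The q-Bessel Fourier transform `F_{q,v}`. -/
def Fqv (q v : ℝ) (f : ℝ → ℝ) (x : ℝ) : ℝ :=
  cqv q v * jackson q (fun t => f t * jv q v (x * t) * t ^ (2 * v + 1))

/-- The q-translation operator `T_{q,x}^v`. -/
def Tqv (q v x : ℝ) (f : ℝ → ℝ) (y : ℝ) : ℝ :=
  cqv q v * jackson q (fun t => Fqv q v f t * jv q v (y * t) * jv q v (x * t) * t ^ (2 * v + 1))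

/-- The kernel `D_v(x,y,z)`. -/
def Dv (q v x y z : ℝ) : ℝ :=
  (cqv q v) ^ (2 : ℕ) *
    jackson q (fun s => jv q v (x * s) * jv q v (y * s) * jv q v (z * s) * s ^ (2 * v + 1))

/-- The q-convolution product `f ∗_q g`. -/
def qConv (q v : ℝ) (f g : ℝ → ℝ) (x : ℝ) : ℝ :=
  cqv q v * jackson q (fun y => Tqv q v x f y * g y * y ^ (2 * v + 1))

/-- The inner product of the Hilbert space `L_{q,2,v}`. -/
def inner2 (q v : ℝ) (f g : ℝ → ℝ) : ℝ :=
  jackson q (fun t => f t * g t * t ^ (2 * v + 1))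

/-- The q-translation operator expressed through the kernel `D_v`. -/
def TD (q v x : ℝ) (f : ℝ → ℝ) (y : ℝ) : ℝ :=
  jackson q (fun z => f z * Dv q v x y z * z ^ (2 * v + 1))

/-- The q-Bessel operator `Δ_{q,v}`. -/
def DeltaQ (q v : ℝ) (f : ℝ → ℝ) (x : ℝ) : ℝ :=
  (1 / x ^ (2 : ℕ)) *
    (f (q⁻¹ * x) - (1 + q ^ (2 * v)) * f x + q ^ (2 * v) * f (q * x))


/-! ### Auxiliary theory: the Euler series `E(w) = (w;Q)_∞` and the
Hahn–Exton symmetry identity for the q-Bessel function. -/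

open Filter

namespace QBessel

/-- Coefficients of the Euler series. -/
def ee (Q : ℝ) (m : ℕ) : ℝ := (-1) ^ m * Q ^ (m.choose 2) / qPoch Q Q m

/-- The Euler series (equal to `(w;Q)_∞`, but we only use the series). -/
def EE (Q w : ℝ) : ℝ := ∑' m : ℕ, ee Q m * w ^ m

/-- The uniform constant bounding `(qPoch w Q n)⁻¹`. -/
def KK (Q w : ℝ) : ℝ := Real.exp (w / (1 - w) * (1 - Q)⁻¹)

/-- A convenient uniform bound for `|EE Q w|`, `|w| ≤ 1`. -/
def BB (Q : ℝ) : ℝ := (∑' n : ℕ, Q ^ (n.choose 2)) * KK Q Q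

lemma choose2_succ (n : ℕ) : (n + 1).choose 2 = n.choose 2 + n := by
  have h := Nat.choose_succ_succ n 1
  rw [Nat.choose_one_right] at h
  norm_num at h
  omega

lemma choose2_add (n m : ℕ) : (n + m).choose 2 = n.choose 2 + m.choose 2 + n * m := by
  induction m with
  | zero => simp
  | succ k ih =>
    have h : n + (k + 1) = (n + k) + 1 := by ring
    rw [h, choose2_succ, ih, choose2_succ, Nat.mul_succ]
    omega

lemma q_pow_split (q : ℝ) (n : ℕ) :
    q ^ (n * (n + 1)) = (q ^ 2) ^ (n.choose 2) * (q ^ 2) ^ n := by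
  induction n with
  | zero => simp
  | succ k ih =>
    have h : (k + 1) * (k + 1 + 1) = k * (k + 1) + 2 * (k + 1) := by ring
    rw [h, pow_add, ih, choose2_succ, pow_add, ← pow_mul]
    ring

section Qfixed

variable {Q : ℝ}

lemma qPoch_pos (hQ0 : 0 < Q) (hQ1 : Q < 1) {w : ℝ} (hw0 : 0 ≤ w) (hw1 : w < 1) (n : ℕ) :
    0 < qPoch w Q n := by
  refine Finset.prod_pos fun k _ => ?_
  have h1 : Q ^ k ≤ 1 := pow_le_one₀ hQ0.le hQ1.le
  have h2 : 0 ≤ Q ^ k := (pow_pos hQ0 k).le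
  nlinarith

lemma qPoch_le_one (hQ0 : 0 < Q) (hQ1 : Q < 1) {w : ℝ} (hw0 : 0 ≤ w) (hw1 : w < 1) (n : ℕ) :
    qPoch w Q n ≤ 1 := by
  refine Finset.prod_le_one (fun k _ => ?_) (fun k _ => ?_)
  · have h1 : Q ^ k ≤ 1 := pow_le_one₀ hQ0.le hQ1.le
    have h2 : 0 ≤ Q ^ k := (pow_pos hQ0 k).le
    nlinarith
  · have h2 : 0 ≤ Q ^ k := (pow_pos hQ0 k).le
    nlinarith [mul_nonneg hw0 h2]

lemma one_sub_ge_exp {x : ℝ} (h0 : 0 ≤ x) (h1 : x < 1) :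
    Real.exp (-(x / (1 - x))) ≤ 1 - x := by
  have hx : 0 < 1 - x := by linarith
  have h := Real.add_one_le_exp (x / (1 - x))
  have h2 : 1 / (1 - x) ≤ Real.exp (x / (1 - x)) := by
    have he : x / (1 - x) + 1 = 1 / (1 - x) := by field_simp; ring
    linarith
  have h3 : 0 < 1 / (1 - x) := by positivity
  calc Real.exp (-(x / (1 - x))) = (Real.exp (x / (1 - x)))⁻¹ := Real.exp_neg _
    _ ≤ (1 / (1 - x))⁻¹ := inv_anti₀ h3 h2
    _ = 1 - x := by field_simp

lemma qPoch_ge (hQ0 : 0 < Q) (hQ1 : Q < 1) {w : ℝ} (hw0 : 0 ≤ w) (hw1 : w < 1) (n : ℕ) :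
    Real.exp (-(w / (1 - w) * (1 - Q)⁻¹)) ≤ qPoch w Q n := by
  have hw' : 0 < 1 - w := by linarith
  have hQ' : 0 < 1 - Q := by linarith
  have key : ∀ k ∈ Finset.range n,
      Real.exp (-(w / (1 - w)) * Q ^ k) ≤ 1 - w * Q ^ k := by
    intro k _
    have hx0 : 0 ≤ w * Q ^ k := mul_nonneg hw0 (pow_pos hQ0 k).le
    have hxw : w * Q ^ k ≤ w := by
      have h1 : Q ^ k ≤ 1 := pow_le_one₀ hQ0.le hQ1.le
      nlinarith
    have hx1 : w * Q ^ k < 1 := lt_of_le_of_lt hxw hw1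
    refine le_trans (Real.exp_le_exp.2 ?_) (one_sub_ge_exp hx0 hx1)
    have hden : 0 < 1 - w * Q ^ k := by linarith
    have h2 : w * Q ^ k / (1 - w * Q ^ k) ≤ w * Q ^ k / (1 - w) :=
      div_le_div_of_nonneg_left hx0 hw' (by linarith)
    have h3 : -(w / (1 - w)) * Q ^ k = -(w * Q ^ k / (1 - w)) := by ring
    rw [h3]
    linarith
  have hsum : ∑ k ∈ Finset.range n, Q ^ k ≤ (1 - Q)⁻¹ := by
    have h1 := Summable.sum_le_tsum (Finset.range n) (fun i _ => (pow_pos hQ0 i).le)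
      (summable_geometric_of_lt_one hQ0.le hQ1)
    rwa [tsum_geometric_of_lt_one hQ0.le hQ1] at h1
  have hexp : Real.exp (-(w / (1 - w) * (1 - Q)⁻¹))
      ≤ Real.exp (∑ k ∈ Finset.range n, -(w / (1 - w)) * Q ^ k) := by
    apply Real.exp_le_exp.2
    rw [← Finset.mul_sum]
    have hnn : 0 ≤ w / (1 - w) := by positivity
    nlinarith [mul_le_mul_of_nonneg_left hsum hnn]
  refine le_trans hexp ?_
  rw [Real.exp_sum]
  exact Finset.prod_le_prod (fun k _ => (Real.exp_pos _).le) key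

lemma qPoch_inv_le (hQ0 : 0 < Q) (hQ1 : Q < 1) {w : ℝ} (hw0 : 0 ≤ w) (hw1 : w < 1) (n : ℕ) :
    (qPoch w Q n)⁻¹ ≤ KK Q w := by
  have h1 := qPoch_ge hQ0 hQ1 hw0 hw1 n
  have h2 : (qPoch w Q n)⁻¹ ≤ (Real.exp (-(w / (1 - w) * (1 - Q)⁻¹)))⁻¹ :=
    inv_anti₀ (Real.exp_pos _) h1
  rwa [← Real.exp_neg, neg_neg] at h2

lemma KK_pos (Q w : ℝ) : 0 < KK Q w := Real.exp_pos _

lemma summable_qchoose (hQ0 : 0 < Q) (hQ1 : Q < 1) {M : ℝ} (hM : 0 ≤ M) :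
    Summable (fun n : ℕ => Q ^ (n.choose 2) * M ^ n) := by
  refine summable_of_ratio_norm_eventually_le (r := 1 / 2) (by norm_num) ?_
  have h0 : Tendsto (fun n : ℕ => Q ^ n * M) atTop (nhds 0) := by
    simpa using (tendsto_pow_atTop_nhds_zero_of_lt_one hQ0.le hQ1).mul_const M
  have h2 : ∀ᶠ n : ℕ in atTop, Q ^ n * M < 1 / 2 := h0.eventually (gt_mem_nhds (by norm_num))
  filter_upwards [h2] with n hn
  have e : Q ^ ((n + 1).choose 2) * M ^ (n + 1)
      = (Q ^ n * M) * (Q ^ (n.choose 2) * M ^ n) := by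
    rw [choose2_succ, pow_add, pow_succ]
    ring
  have hnn : (0:ℝ) ≤ Q ^ (n.choose 2) * M ^ n := by positivity
  have hnn2 : (0:ℝ) ≤ Q ^ n * M := by positivity
  rw [Real.norm_eq_abs, Real.norm_eq_abs, abs_of_nonneg (by positivity),
    abs_of_nonneg hnn, e]
  nlinarith

lemma summable_qchoose1 (hQ0 : 0 < Q) (hQ1 : Q < 1) :
    Summable (fun n : ℕ => Q ^ (n.choose 2)) := by
  exact (summable_qchoose hQ0 hQ1 (zero_le_one)).congr (fun n => by simp)

lemma tsum_qchoose_nonneg (hQ0 : 0 < Q) : 0 ≤ ∑' n : ℕ, Q ^ (n.choose 2) :=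
  tsum_nonneg fun n => (pow_pos hQ0 _).le

lemma BB_nonneg (hQ0 : 0 < Q) : 0 ≤ BB Q :=
  mul_nonneg (tsum_qchoose_nonneg hQ0) (KK_pos Q Q).le

lemma ee_abs_le (hQ0 : 0 < Q) (hQ1 : Q < 1) (m : ℕ) :
    |ee Q m| ≤ Q ^ (m.choose 2) * KK Q Q := by
  have hP := qPoch_pos hQ0 hQ1 hQ0.le hQ1 m
  have h1 : |ee Q m| = Q ^ (m.choose 2) * (qPoch Q Q m)⁻¹ := by
    rw [ee, abs_div, abs_mul, abs_pow, abs_pow, abs_neg, abs_one, one_pow, one_mul,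
      abs_of_pos hQ0, abs_of_pos hP, div_eq_mul_inv]
  rw [h1]
  exact mul_le_mul_of_nonneg_left (qPoch_inv_le hQ0 hQ1 hQ0.le hQ1 m) (by positivity)

lemma summable_ee_abs (hQ0 : 0 < Q) (hQ1 : Q < 1) (w : ℝ) :
    Summable (fun m : ℕ => ‖ee Q m * w ^ m‖) := by
  refine Summable.of_nonneg_of_le (fun m => norm_nonneg _) (fun m => ?_)
    (((summable_qchoose hQ0 hQ1 (abs_nonneg w)).mul_right (KK Q Q)))
  rw [Real.norm_eq_abs, abs_mul, abs_pow]
  calc |ee Q m| * |w| ^ m ≤ (Q ^ (m.choose 2) * KK Q Q) * |w| ^ m := by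
        exact mul_le_mul_of_nonneg_right (ee_abs_le hQ0 hQ1 m) (by positivity)
    _ = Q ^ (m.choose 2) * |w| ^ m * KK Q Q := by ring

lemma summable_ee (hQ0 : 0 < Q) (hQ1 : Q < 1) (w : ℝ) :
    Summable (fun m : ℕ => ee Q m * w ^ m) :=
  Summable.of_norm (summable_ee_abs hQ0 hQ1 w)

lemma EE_abs_le (hQ0 : 0 < Q) (hQ1 : Q < 1) {w : ℝ} (hw : |w| ≤ 1) :
    |EE Q w| ≤ BB Q := by
  have h1 : |EE Q w| ≤ ∑' m : ℕ, ‖ee Q m * w ^ m‖ := by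
    rw [EE, ← Real.norm_eq_abs]
    exact norm_tsum_le_tsum_norm (summable_ee_abs hQ0 hQ1 w)
  refine h1.trans ?_
  have h2 : ∀ m : ℕ, ‖ee Q m * w ^ m‖ ≤ Q ^ (m.choose 2) * KK Q Q := by
    intro m
    rw [Real.norm_eq_abs, abs_mul, abs_pow]
    have hwm : |w| ^ m ≤ 1 := pow_le_one₀ (abs_nonneg w) hw
    calc |ee Q m| * |w| ^ m ≤ |ee Q m| * 1 :=
          mul_le_mul_of_nonneg_left hwm (abs_nonneg _)
      _ = |ee Q m| := mul_one _
      _ ≤ Q ^ (m.choose 2) * KK Q Q := ee_abs_le hQ0 hQ1 m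
  calc (∑' m : ℕ, ‖ee Q m * w ^ m‖) ≤ ∑' m : ℕ, Q ^ (m.choose 2) * KK Q Q :=
        Summable.tsum_le_tsum h2 (summable_ee_abs hQ0 hQ1 w)
          ((summable_qchoose1 hQ0 hQ1).mul_right _)
    _ = BB Q := tsum_mul_right

lemma ee_zero (Q : ℝ) : ee Q 0 = 1 := by simp [ee, qPoch]

lemma EE_sub_one (hQ0 : 0 < Q) (hQ1 : Q < 1) {w : ℝ} (hw : |w| ≤ 1) :
    |EE Q w - 1| ≤ BB Q * |w| := by
  have hs := summable_ee hQ0 hQ1 w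
  have h0 : EE Q w = ee Q 0 * w ^ 0 + ∑' m : ℕ, ee Q (m + 1) * w ^ (m + 1) :=
    Summable.tsum_eq_zero_add hs
  have he0 : ee Q 0 * w ^ 0 = 1 := by simp [ee_zero]
  have hEe : EE Q w - 1 = ∑' m : ℕ, ee Q (m + 1) * w ^ (m + 1) := by
    rw [h0, he0]; ring
  have hterm : ∀ m : ℕ, ‖ee Q (m + 1) * w ^ (m + 1)‖ ≤ Q ^ (m.choose 2) * KK Q Q * |w| := by
    intro m
    rw [Real.norm_eq_abs, abs_mul, abs_pow]
    have h1 : |ee Q (m + 1)| ≤ Q ^ (m.choose 2) * KK Q Q := by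
      refine (ee_abs_le hQ0 hQ1 (m + 1)).trans ?_
      have : Q ^ ((m+1).choose 2) ≤ Q ^ (m.choose 2) :=
        pow_le_pow_of_le_one hQ0.le hQ1.le (by rw [choose2_succ]; omega)
      exact mul_le_mul_of_nonneg_right this (KK_pos Q Q).le
    have h2 : |w| ^ (m + 1) ≤ |w| := by
      rw [pow_succ]
      have : |w| ^ m ≤ 1 := pow_le_one₀ (abs_nonneg w) hw
      nlinarith [abs_nonneg w]
    calc |ee Q (m+1)| * |w| ^ (m+1) ≤ (Q ^ (m.choose 2) * KK Q Q) * |w| := by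
          apply mul_le_mul h1 h2 (by positivity)
            (mul_nonneg (by positivity) (KK_pos Q Q).le)
      _ = Q ^ (m.choose 2) * KK Q Q * |w| := rfl
  have hmaj : Summable (fun m : ℕ => Q ^ (m.choose 2) * KK Q Q * |w|) :=
    ((summable_qchoose1 hQ0 hQ1).mul_right _).mul_right _
  have hnorm : Summable (fun m : ℕ => ‖ee Q (m + 1) * w ^ (m + 1)‖) :=
    Summable.of_nonneg_of_le (fun m => norm_nonneg _) hterm hmaj
  calc |EE Q w - 1| = ‖∑' m : ℕ, ee Q (m + 1) * w ^ (m + 1)‖ := by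
        rw [hEe, Real.norm_eq_abs]
    _ ≤ ∑' m : ℕ, ‖ee Q (m + 1) * w ^ (m + 1)‖ := norm_tsum_le_tsum_norm hnorm
    _ ≤ ∑' m : ℕ, Q ^ (m.choose 2) * KK Q Q * |w| := Summable.tsum_le_tsum hterm hnorm hmaj
    _ = (∑' m : ℕ, Q ^ (m.choose 2) * KK Q Q) * |w| := tsum_mul_right
    _ = BB Q * |w| := by rw [BB, tsum_mul_right]

lemma ee_rec (hQ0 : 0 < Q) (hQ1 : Q < 1) (m : ℕ) :
    ee Q (m + 1) * (1 - Q ^ (m + 1)) = -(ee Q m * Q ^ m) := by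
  have hP : qPoch Q Q (m + 1) = qPoch Q Q m * (1 - Q * Q ^ m) := by
    rw [qPoch, Finset.prod_range_succ, ← qPoch]
  have hPm : qPoch Q Q m ≠ 0 := (qPoch_pos hQ0 hQ1 hQ0.le hQ1 m).ne'
  have hq1 : (1:ℝ) - Q * Q ^ m ≠ 0 := by
    have h1 : Q * Q ^ m < 1 := by
      have := pow_lt_one₀ hQ0.le hQ1 (Nat.succ_ne_zero m)
      rwa [pow_succ, mul_comm] at this
    linarith
  have hpow : Q ^ (m + 1) = Q * Q ^ m := by rw [pow_succ]; ring
  rw [ee, ee, choose2_succ, hP, hpow, pow_add, pow_succ]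
  field_simp
  ring

lemma EE_funeq (hQ0 : 0 < Q) (hQ1 : Q < 1) (w : ℝ) :
    EE Q w = (1 - w) * EE Q (Q * w) := by
  have hsw := summable_ee hQ0 hQ1 w
  have hsQ := summable_ee hQ0 hQ1 (Q * w)
  have hdiff : Summable (fun m : ℕ => ee Q m * w ^ m - ee Q m * (Q * w) ^ m) := hsw.sub hsQ
  have h1 : EE Q w - EE Q (Q * w) = ∑' m : ℕ, (ee Q m * w ^ m - ee Q m * (Q * w) ^ m) :=
    (Summable.tsum_sub hsw hsQ).symm
  have h2 := Summable.tsum_eq_zero_add hdiff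
  have h3 : ∀ m : ℕ,
      ee Q (m + 1) * w ^ (m + 1) - ee Q (m + 1) * (Q * w) ^ (m + 1)
        = -(w * (ee Q m * (Q * w) ^ m)) := by
    intro m
    have hrec := ee_rec hQ0 hQ1 m
    have hmp : (Q * w) ^ (m + 1) = Q ^ (m + 1) * w ^ (m + 1) := mul_pow Q w (m + 1)
    have hmp2 : (Q * w) ^ m = Q ^ m * w ^ m := mul_pow Q w m
    rw [hmp, hmp2]
    have hws : w ^ (m + 1) = w ^ m * w := pow_succ w m
    rw [hws]
    linear_combination (w ^ m * w) * hrec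
  have h4 : ∑' m : ℕ, (ee Q (m+1) * w ^ (m+1) - ee Q (m+1) * (Q * w) ^ (m+1))
      = -(w * EE Q (Q * w)) := by
    rw [tsum_congr h3, tsum_neg, EE, ← tsum_mul_left]
  have h5 : (ee Q 0 * w ^ 0 - ee Q 0 * (Q * w) ^ 0) = 0 := by simp
  rw [h2, h4, h5] at h1
  have : EE Q w = EE Q (Q * w) - w * EE Q (Q * w) := by linarith
  rw [this]; ring

lemma EE_poch (hQ0 : 0 < Q) (hQ1 : Q < 1) (w : ℝ) (n : ℕ) :
    EE Q w = qPoch w Q n * EE Q (w * Q ^ n) := by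
  induction n with
  | zero => simp [qPoch]
  | succ k ih =>
    have hh : qPoch w Q (k + 1) = qPoch w Q k * (1 - w * Q ^ k) := by
      rw [qPoch, Finset.prod_range_succ, ← qPoch]
    have harg : Q * (w * Q ^ k) = w * Q ^ (k + 1) := by rw [pow_succ]; ring
    rw [ih, EE_funeq hQ0 hQ1 (w * Q ^ k), harg, hh]
    ring

lemma EE_zpow_zero (hQ0 : 0 < Q) (hQ1 : Q < 1) (t : ℤ) (ht : t ≤ 0) :
    EE Q ((Q : ℝ) ^ t) = 0 := by
  set j := (-t).toNat with hjdef
  have hjt : (j : ℤ) = -t := Int.toNat_of_nonneg (by omega)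
  have hfac : 1 - (Q : ℝ) ^ t * Q ^ j = 0 := by
    have h1 : (Q : ℝ) ^ t * Q ^ j = Q ^ (t + (j : ℤ)) := by
      rw [← zpow_natCast Q j, ← zpow_add₀ hQ0.ne']
    rw [h1, show t + (j : ℤ) = 0 by omega, zpow_zero]
    ring
  have hP : qPoch ((Q : ℝ) ^ t) Q (j + 1) = 0 := by
    rw [qPoch]
    exact Finset.prod_eq_zero (Finset.self_mem_range_succ j) hfac
  rw [EE_poch hQ0 hQ1 ((Q : ℝ) ^ t) (j + 1), hP, zero_mul]

/-- The symmetric double series. -/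
def DD (Q u w : ℝ) (p : ℕ × ℕ) : ℝ :=
  (-1) ^ (p.1 + p.2) * Q ^ ((p.1 + p.2).choose 2) * u ^ p.1 * w ^ p.2 /
    (qPoch Q Q p.1 * qPoch Q Q p.2)

lemma DD_swap (Q u w : ℝ) (p : ℕ × ℕ) : DD Q u w p = DD Q w u p.swap := by
  obtain ⟨n, m⟩ := p
  simp only [DD, Prod.swap_prod_mk]
  rw [add_comm m n]
  ring

lemma row_expand (hQ0 : 0 < Q) (hQ1 : Q < 1) (u w : ℝ) (n : ℕ) :
    ((-1) ^ n * Q ^ (n.choose 2) * u ^ n / qPoch Q Q n) * EE Q (w * Q ^ n)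
      = ∑' m : ℕ, DD Q u w (n, m) := by
  rw [EE, ← tsum_mul_left]
  refine tsum_congr fun m => ?_
  have h1 : (w * Q ^ n) ^ m = w ^ m * Q ^ (n * m) := by rw [mul_pow, ← pow_mul]
  have hPn : qPoch Q Q n ≠ 0 := (qPoch_pos hQ0 hQ1 hQ0.le hQ1 n).ne'
  have hPm : qPoch Q Q m ≠ 0 := (qPoch_pos hQ0 hQ1 hQ0.le hQ1 m).ne'
  simp only [DD, ee, choose2_add, h1, pow_add]
  field_simp

lemma DD_summable (hQ0 : 0 < Q) (hQ1 : Q < 1) (u w : ℝ) :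
    Summable (DD Q u w) := by
  have h1 : Summable (fun n : ℕ => Q ^ (n.choose 2) * |u| ^ n * KK Q Q) :=
    (summable_qchoose hQ0 hQ1 (abs_nonneg u)).mul_right _
  have h2 : Summable (fun m : ℕ => Q ^ (m.choose 2) * |w| ^ m * KK Q Q) :=
    (summable_qchoose hQ0 hQ1 (abs_nonneg w)).mul_right _
  have hprod := h1.mul_of_nonneg h2
    (fun n => mul_nonneg (by positivity) (KK_pos Q Q).le)
    (fun m => mul_nonneg (by positivity) (KK_pos Q Q).le)
  refine Summable.of_norm (Summable.of_nonneg_of_le (fun p => norm_nonneg _)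
    (fun p => ?_) hprod)
  obtain ⟨n, m⟩ := p
  have hPn := qPoch_pos hQ0 hQ1 hQ0.le hQ1 n
  have hPm := qPoch_pos hQ0 hQ1 hQ0.le hQ1 m
  have e1 : ‖DD Q u w (n, m)‖
      = Q ^ ((n + m).choose 2) * |u| ^ n * |w| ^ m / (qPoch Q Q n * qPoch Q Q m) := by
    rw [Real.norm_eq_abs, DD]
    rw [abs_div, abs_mul, abs_mul, abs_mul, abs_pow, abs_pow, abs_pow, abs_pow,
      abs_neg, abs_one, one_pow, one_mul, abs_of_pos hQ0, abs_mul,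
      abs_of_pos hPn, abs_of_pos hPm]
  rw [e1, choose2_add, pow_add, pow_add, div_eq_mul_inv, mul_inv]
  have hKn := qPoch_inv_le hQ0 hQ1 hQ0.le hQ1 n
  have hKm := qPoch_inv_le hQ0 hQ1 hQ0.le hQ1 m
  have hnm : Q ^ (n * m) ≤ 1 := pow_le_one₀ hQ0.le hQ1.le
  calc Q ^ (n.choose 2) * Q ^ (m.choose 2) * Q ^ (n * m) * |u| ^ n * |w| ^ m *
        ((qPoch Q Q n)⁻¹ * (qPoch Q Q m)⁻¹)
      = (Q ^ (n.choose 2) * |u| ^ n * (qPoch Q Q n)⁻¹) *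
        (Q ^ (m.choose 2) * |w| ^ m * (qPoch Q Q m)⁻¹) * Q ^ (n * m) := by ring
    _ ≤ (Q ^ (n.choose 2) * |u| ^ n * KK Q Q) *
        (Q ^ (m.choose 2) * |w| ^ m * KK Q Q) * 1 := by
        have ha : 0 ≤ Q ^ (n.choose 2) * |u| ^ n := by positivity
        have hb : 0 ≤ Q ^ (m.choose 2) * |w| ^ m := by positivity
        have l1 : Q ^ (n.choose 2) * |u| ^ n * (qPoch Q Q n)⁻¹
            ≤ Q ^ (n.choose 2) * |u| ^ n * KK Q Q := mul_le_mul_of_nonneg_left hKn ha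
        have l2 : Q ^ (m.choose 2) * |w| ^ m * (qPoch Q Q m)⁻¹
            ≤ Q ^ (m.choose 2) * |w| ^ m * KK Q Q := mul_le_mul_of_nonneg_left hKm hb
        have p1 : 0 ≤ Q ^ (n.choose 2) * |u| ^ n * (qPoch Q Q n)⁻¹ := by positivity
        have p2 : 0 ≤ Q ^ (m.choose 2) * |w| ^ m * (qPoch Q Q m)⁻¹ := by positivity
        have p3 : 0 ≤ Q ^ (n.choose 2) * |u| ^ n * KK Q Q :=
          mul_nonneg (by positivity) (KK_pos Q Q).le
        have p4 : 0 ≤ Q ^ (m.choose 2) * |w| ^ m * KK Q Q :=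
          mul_nonneg (by positivity) (KK_pos Q Q).le
        have hmul : Q ^ (n.choose 2) * |u| ^ n * (qPoch Q Q n)⁻¹ *
            (Q ^ (m.choose 2) * |w| ^ m * (qPoch Q Q m)⁻¹)
            ≤ Q ^ (n.choose 2) * |u| ^ n * KK Q Q *
              (Q ^ (m.choose 2) * |w| ^ m * KK Q Q) :=
          mul_le_mul l1 l2 p2 p3
        have hfin : 0 ≤ Q ^ (n.choose 2) * |u| ^ n * KK Q Q *
            (Q ^ (m.choose 2) * |w| ^ m * KK Q Q) := mul_nonneg p3 p4
        nlinarith [pow_pos hQ0 (n * m)]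
    _ = Q ^ (n.choose 2) * |u| ^ n * KK Q Q * (Q ^ (m.choose 2) * |w| ^ m * KK Q Q) := by
        ring

lemma sym_identity (hQ0 : 0 < Q) (hQ1 : Q < 1) (u w : ℝ) :
    ∑' n : ℕ, (((-1) ^ n * Q ^ (n.choose 2) * u ^ n / qPoch Q Q n) * EE Q (w * Q ^ n))
      = ∑' m : ℕ, (((-1) ^ m * Q ^ (m.choose 2) * w ^ m / qPoch Q Q m) * EE Q (u * Q ^ m)) := by
  calc ∑' n : ℕ, (((-1) ^ n * Q ^ (n.choose 2) * u ^ n / qPoch Q Q n) * EE Q (w * Q ^ n))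
      = ∑' n : ℕ, ∑' m : ℕ, DD Q u w (n, m) := tsum_congr (row_expand hQ0 hQ1 u w)
    _ = ∑' p : ℕ × ℕ, DD Q u w p := (Summable.tsum_prod (DD_summable hQ0 hQ1 u w)).symm
    _ = ∑' p : ℕ × ℕ, DD Q w u p := by
        rw [← (Equiv.prodComm ℕ ℕ).tsum_eq (DD Q w u)]
        refine tsum_congr fun p => ?_
        rw [DD_swap Q u w p]
        rfl
    _ = ∑' m : ℕ, ∑' n : ℕ, DD Q w u (m, n) := Summable.tsum_prod (DD_summable hQ0 hQ1 w u)
    _ = ∑' m : ℕ, (((-1) ^ m * Q ^ (m.choose 2) * w ^ m / qPoch Q Q m) * EE Q (u * Q ^ m)) :=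
        tsum_congr fun m => (row_expand hQ0 hQ1 w u m).symm

end Qfixed

/-! ### Specialization to the q-Bessel function -/

/-- The terms of the series defining `jv`. -/
def jvt (q v x : ℝ) (n : ℕ) : ℝ :=
  (-1 : ℝ) ^ n * q ^ (n * (n + 1)) /
    (qPoch (q ^ (2 * v + 2)) (q ^ 2) n * qPoch ((q : ℝ) ^ (2 : ℕ)) (q ^ 2) n) * x ^ (2 * n)

lemma jv_eq_tsum (q v x : ℝ) : jv q v x = ∑' n : ℕ, jvt q v x n := rfl

/-- Tail sums of the dominating series. -/
def TailQA (q v : ℝ) (k : ℕ) : ℝ :=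
  ∑' i : ℕ, ((q : ℝ) ^ (2 : ℕ)) ^ ((i + k).choose 2) * (q ^ (2 * v + 2)) ^ (i + k)

section qv

variable {q v : ℝ} (hq : 0 < q) (hq1 : q < 1) (hv : -1 < v)

include hq hq1 in
lemma hQ0' : 0 < (q : ℝ) ^ (2 : ℕ) := pow_pos hq 2

include hq hq1 in
lemma hQ1' : (q : ℝ) ^ (2 : ℕ) < 1 := pow_lt_one₀ hq.le hq1 two_ne_zero

include hq hq1 hv in
lemma hA0' : 0 < q ^ (2 * v + 2) := Real.rpow_pos_of_pos hq _

include hq hq1 hv in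
lemma hA1' : q ^ (2 * v + 2) < 1 := Real.rpow_lt_one hq.le hq1 (by linarith)

include hq hq1 hv in
lemma jvt_abs (x : ℝ) (n : ℕ) :
    |jvt q v x n| = ((q : ℝ) ^ (2 : ℕ)) ^ (n.choose 2) * (((q : ℝ) ^ (2 : ℕ)) * x ^ (2:ℕ)) ^ n *
      ((qPoch (q ^ (2 * v + 2)) (q ^ 2) n)⁻¹ * (qPoch ((q : ℝ) ^ (2 : ℕ)) (q ^ 2) n)⁻¹) := by
  have hQ0 := hQ0' hq hq1
  have hQ1 := hQ1' hq hq1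
  have hA0 := hA0' hq hq1 hv
  have hA1 := hA1' hq hq1 hv
  have hPa := qPoch_pos hQ0 hQ1 hA0.le hA1 n
  have hPq := qPoch_pos hQ0 hQ1 hQ0.le hQ1 n
  have hsplit : (q : ℝ) ^ (n * (n + 1)) * x ^ (2 * n)
      = ((q : ℝ) ^ (2:ℕ)) ^ (n.choose 2) * (((q : ℝ) ^ (2:ℕ)) * x ^ (2:ℕ)) ^ n := by
    rw [q_pow_split q n, mul_pow, pow_mul]
    ring
  have hxabs : |x ^ (2 * n)| = x ^ (2 * n) := by
    rw [abs_pow, Even.pow_abs (even_two_mul n)]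
  have habs : |jvt q v x n|
      = (q : ℝ) ^ (n * (n + 1)) * x ^ (2 * n) /
        (qPoch (q ^ (2 * v + 2)) (q ^ 2) n * qPoch ((q : ℝ) ^ (2 : ℕ)) (q ^ 2) n) := by
    rw [jvt, abs_mul, abs_div, abs_mul, abs_pow, abs_neg, abs_one, one_pow, one_mul,
      abs_of_pos (pow_pos hq _), abs_mul, abs_of_pos hPa, abs_of_pos hPq, hxabs,
      div_mul_eq_mul_div]
  rw [habs, ← hsplit]
  field_simp

include hq hq1 hv in
lemma summable_jvt_abs (x : ℝ) : Summable (fun n : ℕ => |jvt q v x n|) := by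
  have hQ0 := hQ0' hq hq1
  have hQ1 := hQ1' hq hq1
  have hA0 := hA0' hq hq1 hv
  have hA1 := hA1' hq hq1 hv
  have hM : (0:ℝ) ≤ ((q : ℝ) ^ (2:ℕ)) * x ^ (2:ℕ) := by positivity
  refine Summable.of_nonneg_of_le (fun n => abs_nonneg _) (fun n => ?_)
    (((summable_qchoose hQ0 hQ1 hM).mul_right
      (KK ((q : ℝ) ^ (2:ℕ)) (q ^ (2 * v + 2)) * KK ((q : ℝ) ^ (2:ℕ)) ((q : ℝ) ^ (2:ℕ)))))
  rw [jvt_abs hq hq1 hv x n]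
  have h1 := qPoch_inv_le hQ0 hQ1 hA0.le hA1 n
  have h2 := qPoch_inv_le hQ0 hQ1 hQ0.le hQ1 n
  have hbase : (0:ℝ) ≤ ((q : ℝ) ^ (2:ℕ)) ^ (n.choose 2) * (((q : ℝ) ^ (2:ℕ)) * x ^ (2:ℕ)) ^ n := by
    positivity
  have hmul : (qPoch (q ^ (2 * v + 2)) (q ^ 2) n)⁻¹ * (qPoch ((q : ℝ) ^ (2 : ℕ)) (q ^ 2) n)⁻¹
      ≤ KK ((q : ℝ) ^ (2:ℕ)) (q ^ (2 * v + 2)) * KK ((q : ℝ) ^ (2:ℕ)) ((q : ℝ) ^ (2:ℕ)) := by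
    have p1 : 0 ≤ (qPoch (q ^ (2 * v + 2)) (q ^ 2) n)⁻¹ :=
      (inv_pos.2 (qPoch_pos hQ0 hQ1 hA0.le hA1 n)).le
    have p2 : 0 ≤ (qPoch ((q : ℝ) ^ (2 : ℕ)) (q ^ 2) n)⁻¹ :=
      (inv_pos.2 (qPoch_pos hQ0 hQ1 hQ0.le hQ1 n)).le
    exact mul_le_mul h1 h2 p2 (KK_pos _ _).le
  calc ((q : ℝ) ^ (2:ℕ)) ^ (n.choose 2) * (((q : ℝ) ^ (2:ℕ)) * x ^ (2:ℕ)) ^ n *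
        ((qPoch (q ^ (2 * v + 2)) (q ^ 2) n)⁻¹ * (qPoch ((q : ℝ) ^ (2 : ℕ)) (q ^ 2) n)⁻¹)
      ≤ ((q : ℝ) ^ (2:ℕ)) ^ (n.choose 2) * (((q : ℝ) ^ (2:ℕ)) * x ^ (2:ℕ)) ^ n *
        (KK ((q : ℝ) ^ (2:ℕ)) (q ^ (2 * v + 2)) * KK ((q : ℝ) ^ (2:ℕ)) ((q : ℝ) ^ (2:ℕ))) :=
        mul_le_mul_of_nonneg_left hmul hbase
    _ = _ := by ring

include hq hq1 hv in
lemma summable_jvt (x : ℝ) : Summable (fun n : ℕ => jvt q v x n) :=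
  Summable.of_norm (by simpa [Real.norm_eq_abs] using summable_jvt_abs hq hq1 hv x)

include hq hq1 hv in
lemma jv_dual (x : ℝ) :
    EE ((q : ℝ) ^ (2 : ℕ)) (q ^ (2 * v + 2)) * jv q v x
      = ∑' m : ℕ, (((-1) ^ m * ((q : ℝ) ^ (2 : ℕ)) ^ (m.choose 2) * (q ^ (2 * v + 2)) ^ m /
          qPoch ((q : ℝ) ^ (2 : ℕ)) ((q : ℝ) ^ (2 : ℕ)) m) *
        EE ((q : ℝ) ^ (2 : ℕ)) ((((q : ℝ) ^ (2 : ℕ)) * x ^ (2 : ℕ)) * ((q : ℝ) ^ (2 : ℕ)) ^ m)) := by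
  have hQ0 := hQ0' hq hq1
  have hQ1 := hQ1' hq hq1
  have hA0 := hA0' hq hq1 hv
  have hA1 := hA1' hq hq1 hv
  have key : ∀ n : ℕ, EE ((q : ℝ) ^ (2 : ℕ)) (q ^ (2 * v + 2)) * jvt q v x n
      = (((-1) ^ n * ((q : ℝ) ^ (2 : ℕ)) ^ (n.choose 2) * (((q : ℝ) ^ (2 : ℕ)) * x ^ (2 : ℕ)) ^ n /
          qPoch ((q : ℝ) ^ (2 : ℕ)) ((q : ℝ) ^ (2 : ℕ)) n) *
        EE ((q : ℝ) ^ (2 : ℕ)) (q ^ (2 * v + 2) * ((q : ℝ) ^ (2 : ℕ)) ^ n)) := by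
    intro n
    have hPa := qPoch_pos hQ0 hQ1 hA0.le hA1 n
    have hPq := qPoch_pos hQ0 hQ1 hQ0.le hQ1 n
    have hsplit : (q : ℝ) ^ (n * (n + 1)) * x ^ (2 * n)
        = ((q : ℝ) ^ (2 : ℕ)) ^ (n.choose 2) * (((q : ℝ) ^ (2 : ℕ)) * x ^ (2 : ℕ)) ^ n := by
      rw [q_pow_split q n, mul_pow, pow_mul]
      ring
    rw [EE_poch hQ0 hQ1 (q ^ (2 * v + 2)) n, jvt, div_mul_eq_mul_div,
      mul_assoc ((-1 : ℝ) ^ n) ((q : ℝ) ^ (n * (n + 1))) (x ^ (2 * n)), hsplit]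
    field_simp
    have hP' : qPoch (q ^ (2 * (v + 1))) (q ^ 2) n ≠ 0 := by
      rw [show (2:ℝ) * (v + 1) = 2 * v + 2 by ring]; exact hPa.ne'
    rw [mul_assoc, mul_div_cancel_left₀ _ hP']
  rw [jv_eq_tsum, ← tsum_mul_left, tsum_congr key]
  exact sym_identity hQ0 hQ1 (((q : ℝ) ^ (2 : ℕ)) * x ^ (2 : ℕ)) (q ^ (2 * v + 2))

include hq hq1 hv in
lemma EE_A_ne : EE ((q : ℝ) ^ (2 : ℕ)) (q ^ (2 * v + 2)) ≠ 0 := by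
  have hQ0 := hQ0' hq hq1
  have hQ1 := hQ1' hq hq1
  have hA0 := hA0' hq hq1 hv
  have hA1 := hA1' hq hq1 hv
  have hBB := BB_nonneg hQ0
  obtain ⟨n, hn⟩ := exists_pow_lt_of_lt_one
    (show (0:ℝ) < 1 / (BB ((q : ℝ) ^ (2 : ℕ)) + 1) by positivity) hQ1
  have hQn0 : (0:ℝ) < ((q : ℝ) ^ (2 : ℕ)) ^ n := pow_pos hQ0 n
  have hQn1 : ((q : ℝ) ^ (2 : ℕ)) ^ n ≤ 1 := pow_le_one₀ hQ0.le hQ1.le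
  have hargnn : (0:ℝ) ≤ q ^ (2 * v + 2) * ((q : ℝ) ^ (2 : ℕ)) ^ n :=
    mul_nonneg hA0.le hQn0.le
  have harg : |q ^ (2 * v + 2) * ((q : ℝ) ^ (2 : ℕ)) ^ n| ≤ 1 := by
    rw [abs_of_nonneg hargnn]
    nlinarith
  have hclose := EE_sub_one hQ0 hQ1 harg
  have hlt : BB ((q : ℝ) ^ (2 : ℕ)) * |q ^ (2 * v + 2) * ((q : ℝ) ^ (2 : ℕ)) ^ n| < 1 := by
    rw [abs_of_nonneg hargnn]
    have h1 : q ^ (2 * v + 2) * ((q : ℝ) ^ (2 : ℕ)) ^ n ≤ ((q : ℝ) ^ (2 : ℕ)) ^ n := by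
      nlinarith [mul_nonneg (sub_nonneg.2 hA1.le) hQn0.le]
    have h2 := mul_le_mul_of_nonneg_left h1 hBB
    have h3 := mul_le_mul_of_nonneg_left hn.le hBB
    have h4 : BB ((q : ℝ) ^ (2 : ℕ)) * (1 / (BB ((q : ℝ) ^ (2 : ℕ)) + 1)) < 1 := by
      rw [mul_one_div, div_lt_one (by linarith)]
      linarith
    linarith
  have hEne : EE ((q : ℝ) ^ (2 : ℕ)) (q ^ (2 * v + 2) * ((q : ℝ) ^ (2 : ℕ)) ^ n) ≠ 0 := by
    intro h0
    rw [h0] at hclose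
    simp only [zero_sub, abs_neg, abs_one] at hclose
    linarith
  have hP := (qPoch_pos hQ0 hQ1 hA0.le hA1 n).ne'
  rw [EE_poch hQ0 hQ1 (q ^ (2 * v + 2)) n]
  exact mul_ne_zero hP hEne

include hq hq1 hv in
lemma summable_QA :
    Summable (fun m : ℕ => ((q : ℝ) ^ (2 : ℕ)) ^ (m.choose 2) * (q ^ (2 * v + 2)) ^ m) :=
  summable_qchoose (hQ0' hq hq1) (hQ1' hq hq1) (hA0' hq hq1 hv).le

include hq hq1 hv in
lemma tail_eq (k : ℕ) :
    TailQA q v k = (∑' m : ℕ, ((q : ℝ) ^ (2 : ℕ)) ^ (m.choose 2) * (q ^ (2 * v + 2)) ^ m)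
      - ∑ i ∈ Finset.range k, ((q : ℝ) ^ (2 : ℕ)) ^ (i.choose 2) * (q ^ (2 * v + 2)) ^ i := by
  have h := Summable.sum_add_tsum_nat_add
    (f := fun m : ℕ => ((q : ℝ) ^ (2 : ℕ)) ^ (m.choose 2) * (q ^ (2 * v + 2)) ^ m) k
    (summable_QA hq hq1 hv)
  have h2 : TailQA q v k
      = ∑' i : ℕ, ((q : ℝ) ^ (2 : ℕ)) ^ ((i + k).choose 2) * (q ^ (2 * v + 2)) ^ (i + k) := rfl
  rw [h2]
  linarith

include hq hq1 hv in
lemma tail_nonneg (k : ℕ) : 0 ≤ TailQA q v k :=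
  tsum_nonneg fun i => mul_nonneg (pow_nonneg (pow_pos hq 2).le _)
    (pow_nonneg (Real.rpow_pos_of_pos hq _).le _)

include hq hq1 hv in
lemma tail_le (k : ℕ) : TailQA q v k ≤ TailQA q v 0 := by
  rw [tail_eq hq hq1 hv k, tail_eq hq hq1 hv 0]
  have h : 0 ≤ ∑ i ∈ Finset.range k, ((q : ℝ) ^ (2 : ℕ)) ^ (i.choose 2) * (q ^ (2 * v + 2)) ^ i :=
    Finset.sum_nonneg fun i _ => mul_nonneg (pow_nonneg (pow_pos hq 2).le _)
      (pow_nonneg (Real.rpow_pos_of_pos hq _).le _)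
  simp only [Finset.range_zero, Finset.sum_empty]
  linarith

include hq hq1 hv in
lemma tail_tendsto : Filter.Tendsto (TailQA q v) atTop (nhds 0) := by
  have hS := summable_QA hq hq1 hv
  have hfull := hS.hasSum.tendsto_sum_nat
  have h2 : Filter.Tendsto (fun k : ℕ =>
      (∑' m : ℕ, ((q : ℝ) ^ (2 : ℕ)) ^ (m.choose 2) * (q ^ (2 * v + 2)) ^ m)
      - ∑ i ∈ Finset.range k, ((q : ℝ) ^ (2 : ℕ)) ^ (i.choose 2) * (q ^ (2 * v + 2)) ^ i)
      atTop (nhds 0) := by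
    have hc : Filter.Tendsto
        (fun _ : ℕ => ∑' m : ℕ, ((q : ℝ) ^ (2 : ℕ)) ^ (m.choose 2) * (q ^ (2 * v + 2)) ^ m)
        atTop (nhds (∑' m : ℕ, ((q : ℝ) ^ (2 : ℕ)) ^ (m.choose 2) * (q ^ (2 * v + 2)) ^ m)) :=
      tendsto_const_nhds
    simpa using hc.sub hfull
  exact h2.congr fun k => (tail_eq hq hq1 hv k).symm

lemma sq_zpow (hq : 0 < q) (t : ℤ) :
    ((q : ℝ) ^ t) ^ (2 : ℕ) = ((q : ℝ) ^ (2 : ℕ)) ^ t := by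
  have h1 : ((q : ℝ) ^ t) ^ (2 : ℕ) = (q : ℝ) ^ (t * 2) := by
    rw [← zpow_natCast ((q : ℝ) ^ t) 2, ← zpow_mul]
    norm_num
  have h2 : ((q : ℝ) ^ (2 : ℕ)) ^ t = (q : ℝ) ^ (2 * t) := by
    rw [← zpow_natCast q 2, ← zpow_mul]
    norm_num
  rw [h1, h2, mul_comm]

include hq hq1 hv in
lemma jv_decay (t : ℤ) (ht : t ≤ -1) :
    |EE ((q : ℝ) ^ (2 : ℕ)) (q ^ (2 * v + 2))| * |jv q v ((q : ℝ) ^ t)|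
      ≤ (KK ((q : ℝ) ^ (2 : ℕ)) ((q : ℝ) ^ (2 : ℕ)) * BB ((q : ℝ) ^ (2 : ℕ)))
          * TailQA q v (-(1 + t)).toNat := by
  have hQ0 := hQ0' hq hq1
  have hQ1 := hQ1' hq hq1
  have hA0 := hA0' hq hq1 hv
  have hA1 := hA1' hq hq1 hv
  have hBB := BB_nonneg hQ0
  set Q := (q : ℝ) ^ (2 : ℕ) with hQdef
  set A := q ^ (2 * v + 2) with hAdef
  have harg : ∀ m : ℕ, (Q * ((q : ℝ) ^ t) ^ (2 : ℕ)) * Q ^ m = Q ^ ((1 + t + m : ℤ)) := by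
    intro m
    have h1 : ((q : ℝ) ^ t) ^ (2 : ℕ) = Q ^ t := sq_zpow hq t
    have h2 : (Q : ℝ) ^ m = Q ^ ((m : ℕ) : ℤ) := (zpow_natCast Q m).symm
    have h3 : (Q : ℝ) = Q ^ ((1 : ℤ)) := (zpow_one Q).symm
    rw [h1, h2]
    nth_rewrite 1 [h3]
    rw [← zpow_add₀ hQ0.ne', ← zpow_add₀ hQ0.ne']
  set k := (-(1 + t)).toNat with hkdef
  have hkz : (k : ℤ) = -(1 + t) := Int.toNat_of_nonneg (by omega)
  set h : ℕ → ℝ := fun m => ((-1) ^ m * Q ^ (m.choose 2) * A ^ m / qPoch Q Q m) *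
      EE Q ((Q * ((q : ℝ) ^ t) ^ (2 : ℕ)) * Q ^ m) with hhdef
  have hdual : EE Q A * jv q v ((q : ℝ) ^ t) = ∑' m : ℕ, h m := jv_dual hq hq1 hv ((q : ℝ) ^ t)
  have hzero : ∀ m : ℕ, m < k → h m = 0 := by
    intro m hm
    have hE0 : EE Q ((Q * ((q : ℝ) ^ t) ^ (2 : ℕ)) * Q ^ m) = 0 := by
      rw [harg m]
      exact EE_zpow_zero hQ0 hQ1 _ (by omega)
    rw [hhdef]
    simp only [hE0, mul_zero]
  have hbnd : ∀ m : ℕ, |h m| ≤ (KK Q Q * BB Q) * (Q ^ (m.choose 2) * A ^ m) := by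
    intro m
    rcases lt_or_ge m k with hm | hm
    · rw [hzero m hm, abs_zero]
      exact mul_nonneg (mul_nonneg (KK_pos Q Q).le hBB)
        (mul_nonneg (pow_nonneg hQ0.le _) (pow_nonneg hA0.le _))
    · have hexp : (0:ℤ) ≤ 1 + t + m := by omega
      have hargle : |(Q * ((q : ℝ) ^ t) ^ (2 : ℕ)) * Q ^ m| ≤ 1 := by
        rw [harg m, abs_of_nonneg (zpow_pos hQ0 _).le]
        have he : Q ^ ((1 + t + m : ℤ)) = Q ^ ((1 + t + m : ℤ).toNat) := by
          rw [← zpow_natCast Q, Int.toNat_of_nonneg hexp]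
        rw [he]
        exact pow_le_one₀ hQ0.le hQ1.le
      have hE := EE_abs_le hQ0 hQ1 hargle
      have hPm := qPoch_pos hQ0 hQ1 hQ0.le hQ1 m
      have hcoeff : |(-1) ^ m * Q ^ (m.choose 2) * A ^ m / qPoch Q Q m|
          ≤ Q ^ (m.choose 2) * A ^ m * KK Q Q := by
        have hre : (-1 : ℝ) ^ m * Q ^ (m.choose 2) * A ^ m / qPoch Q Q m
            = (-1 : ℝ) ^ m * (Q ^ (m.choose 2) * A ^ m / qPoch Q Q m) := by ring
        have h0 : |(-1 : ℝ) ^ m * Q ^ (m.choose 2) * A ^ m / qPoch Q Q m|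
            = Q ^ (m.choose 2) * A ^ m / qPoch Q Q m := by
          rw [hre, abs_mul, abs_pow, abs_neg, abs_one, one_pow, one_mul,
            abs_of_nonneg (div_nonneg (mul_nonneg (pow_nonneg hQ0.le _)
              (pow_nonneg hA0.le _)) hPm.le)]
        rw [h0, div_eq_mul_inv]
        exact mul_le_mul_of_nonneg_left (qPoch_inv_le hQ0 hQ1 hQ0.le hQ1 m)
          (mul_nonneg (pow_nonneg hQ0.le _) (pow_nonneg hA0.le _))
      have habs : |h m| = |(-1) ^ m * Q ^ (m.choose 2) * A ^ m / qPoch Q Q m| *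
          |EE Q ((Q * ((q : ℝ) ^ t) ^ (2 : ℕ)) * Q ^ m)| := by
        rw [hhdef]
        exact abs_mul _ _
      rw [habs]
      calc |(-1) ^ m * Q ^ (m.choose 2) * A ^ m / qPoch Q Q m| *
            |EE Q ((Q * ((q : ℝ) ^ t) ^ (2 : ℕ)) * Q ^ m)|
          ≤ (Q ^ (m.choose 2) * A ^ m * KK Q Q) * BB Q :=
            mul_le_mul hcoeff hE (abs_nonneg _)
              (mul_nonneg (mul_nonneg (pow_nonneg hQ0.le _) (pow_nonneg hA0.le _))
                (KK_pos Q Q).le)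
        _ = (KK Q Q * BB Q) * (Q ^ (m.choose 2) * A ^ m) := by ring
  have hSu : Summable (fun m : ℕ => Q ^ (m.choose 2) * A ^ m) := summable_QA hq hq1 hv
  have hmaj : Summable (fun m : ℕ => (KK Q Q * BB Q) * (Q ^ (m.choose 2) * A ^ m)) :=
    hSu.mul_left _
  have hsum_h : Summable h :=
    Summable.of_norm (Summable.of_nonneg_of_le (fun m => norm_nonneg _)
      (fun m => by rw [Real.norm_eq_abs]; exact hbnd m) hmaj)
  have hsplit := Summable.sum_add_tsum_nat_add (f := h) k hsum_h
  have hhead : ∑ i ∈ Finset.range k, h i = 0 :=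
    Finset.sum_eq_zero fun i hi => hzero i (Finset.mem_range.mp hi)
  have hEq : EE Q A * jv q v ((q : ℝ) ^ t) = ∑' i : ℕ, h (i + k) := by
    rw [hdual, ← hsplit, hhead, zero_add]
  have hmajs : Summable (fun i : ℕ => (KK Q Q * BB Q) * (Q ^ ((i + k).choose 2) * A ^ (i + k))) :=
    (summable_nat_add_iff k).mpr hmaj
  have hnorm_shift : Summable (fun i : ℕ => ‖h (i + k)‖) :=
    Summable.of_nonneg_of_le (fun i => norm_nonneg _)
      (fun i => by rw [Real.norm_eq_abs]; exact hbnd (i + k)) hmajs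
  calc |EE Q A| * |jv q v ((q : ℝ) ^ t)| = |EE Q A * jv q v ((q : ℝ) ^ t)| := (abs_mul _ _).symm
    _ = ‖∑' i : ℕ, h (i + k)‖ := by rw [hEq, Real.norm_eq_abs]
    _ ≤ ∑' i : ℕ, ‖h (i + k)‖ := norm_tsum_le_tsum_norm hnorm_shift
    _ ≤ ∑' i : ℕ, (KK Q Q * BB Q) * (Q ^ ((i + k).choose 2) * A ^ (i + k)) :=
        Summable.tsum_le_tsum (fun i => by rw [Real.norm_eq_abs]; exact hbnd (i + k))
          hnorm_shift hmajs
    _ = (KK Q Q * BB Q) * TailQA q v k := by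
        rw [tsum_mul_left]
        rfl

include hq hq1 hv in
lemma jv_le_one_bound {x : ℝ} (hx : |x| ≤ 1) :
    |jv q v x| ≤ (∑' n : ℕ, ((q : ℝ) ^ (2 : ℕ)) ^ (n.choose 2)) *
      (KK ((q : ℝ) ^ (2 : ℕ)) (q ^ (2 * v + 2)) * KK ((q : ℝ) ^ (2 : ℕ)) ((q : ℝ) ^ (2 : ℕ))) := by
  have hQ0 := hQ0' hq hq1
  have hQ1 := hQ1' hq hq1
  have hA0 := hA0' hq hq1 hv
  have hA1 := hA1' hq hq1 hv
  set Q := (q : ℝ) ^ (2 : ℕ) with hQdef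
  set A := q ^ (2 * v + 2) with hAdef
  have hsabs := summable_jvt_abs hq hq1 hv x
  have hsabs' : Summable (fun n : ℕ => ‖jvt q v x n‖) := by
    simpa [Real.norm_eq_abs] using hsabs
  have h1 : |jv q v x| ≤ ∑' n : ℕ, ‖jvt q v x n‖ := by
    rw [jv_eq_tsum, ← Real.norm_eq_abs]
    exact norm_tsum_le_tsum_norm hsabs'
  have hx2 : x ^ (2 : ℕ) ≤ 1 := by
    have := sq_abs x
    nlinarith [abs_nonneg x]
  have hQx : 0 ≤ Q * x ^ (2 : ℕ) := by positivity
  have hQx1 : Q * x ^ (2 : ℕ) ≤ 1 := by nlinarith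
  have hterm : ∀ n : ℕ, ‖jvt q v x n‖ ≤ Q ^ (n.choose 2) * (KK Q A * KK Q Q) := by
    intro n
    rw [Real.norm_eq_abs, jvt_abs hq hq1 hv x n]
    have hPa := qPoch_pos hQ0 hQ1 hA0.le hA1 n
    have hPq := qPoch_pos hQ0 hQ1 hQ0.le hQ1 n
    have hinv : (qPoch A Q n)⁻¹ * (qPoch Q Q n)⁻¹ ≤ KK Q A * KK Q Q :=
      mul_le_mul (qPoch_inv_le hQ0 hQ1 hA0.le hA1 n) (qPoch_inv_le hQ0 hQ1 hQ0.le hQ1 n)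
        (inv_pos.2 hPq).le (KK_pos Q A).le
    have hone : (Q * x ^ (2 : ℕ)) ^ n ≤ 1 := pow_le_one₀ hQx hQx1
    calc Q ^ (n.choose 2) * (Q * x ^ (2 : ℕ)) ^ n * ((qPoch A Q n)⁻¹ * (qPoch Q Q n)⁻¹)
        ≤ Q ^ (n.choose 2) * (Q * x ^ (2 : ℕ)) ^ n * (KK Q A * KK Q Q) :=
          mul_le_mul_of_nonneg_left hinv (by positivity)
      _ ≤ Q ^ (n.choose 2) * 1 * (KK Q A * KK Q Q) := by
          have hKnn : 0 ≤ KK Q A * KK Q Q := mul_nonneg (KK_pos Q A).le (KK_pos Q Q).le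
          have := mul_le_mul_of_nonneg_left hone (pow_nonneg hQ0.le (n.choose 2))
          nlinarith
      _ = Q ^ (n.choose 2) * (KK Q A * KK Q Q) := by ring
  have hmaj : Summable (fun n : ℕ => Q ^ (n.choose 2) * (KK Q A * KK Q Q)) :=
    (summable_qchoose1 hQ0 hQ1).mul_right _
  calc |jv q v x| ≤ ∑' n : ℕ, ‖jvt q v x n‖ := h1
    _ ≤ ∑' n : ℕ, Q ^ (n.choose 2) * (KK Q A * KK Q Q) := Summable.tsum_le_tsum hterm hsabs' hmaj
    _ = (∑' n : ℕ, Q ^ (n.choose 2)) * (KK Q A * KK Q Q) := tsum_mul_right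

include hq hq1 hv in
lemma jvt_zero_eq_one (x : ℝ) : jvt q v x 0 = 1 := by simp [jvt, qPoch]

include hq hq1 hv in
lemma jv_sub_one_bound {x : ℝ} (hx : |x| ≤ 1) :
    |jv q v x - 1| ≤ ((∑' n : ℕ, ((q : ℝ) ^ (2 : ℕ)) ^ (n.choose 2)) *
      (KK ((q : ℝ) ^ (2 : ℕ)) (q ^ (2 * v + 2)) * KK ((q : ℝ) ^ (2 : ℕ)) ((q : ℝ) ^ (2 : ℕ))))
        * x ^ (2 : ℕ) := by
  have hQ0 := hQ0' hq hq1
  have hQ1 := hQ1' hq hq1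
  have hA0 := hA0' hq hq1 hv
  have hA1 := hA1' hq hq1 hv
  set Q := (q : ℝ) ^ (2 : ℕ) with hQdef
  set A := q ^ (2 * v + 2) with hAdef
  have hs := summable_jvt hq hq1 hv x
  have h0 : jv q v x = jvt q v x 0 + ∑' n : ℕ, jvt q v x (n + 1) := by
    rw [jv_eq_tsum]
    exact Summable.tsum_eq_zero_add hs
  have hEe : jv q v x - 1 = ∑' n : ℕ, jvt q v x (n + 1) := by
    rw [h0, jvt_zero_eq_one hq hq1 hv]
    ring
  have hx2 : x ^ (2 : ℕ) ≤ 1 := by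
    have := sq_abs x
    nlinarith [abs_nonneg x]
  have hx2nn : 0 ≤ x ^ (2 : ℕ) := by positivity
  have hQx : 0 ≤ Q * x ^ (2 : ℕ) := by positivity
  have hQx1 : Q * x ^ (2 : ℕ) ≤ 1 := by nlinarith
  have hterm : ∀ n : ℕ, ‖jvt q v x (n + 1)‖
      ≤ Q ^ (n.choose 2) * (KK Q A * KK Q Q) * x ^ (2 : ℕ) := by
    intro n
    rw [Real.norm_eq_abs, jvt_abs hq hq1 hv x (n + 1)]
    have hPa := qPoch_pos hQ0 hQ1 hA0.le hA1 (n + 1)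
    have hPq := qPoch_pos hQ0 hQ1 hQ0.le hQ1 (n + 1)
    have hinv : (qPoch A Q (n + 1))⁻¹ * (qPoch Q Q (n + 1))⁻¹ ≤ KK Q A * KK Q Q :=
      mul_le_mul (qPoch_inv_le hQ0 hQ1 hA0.le hA1 (n + 1))
        (qPoch_inv_le hQ0 hQ1 hQ0.le hQ1 (n + 1)) (inv_pos.2 hPq).le (KK_pos Q A).le
    have hch : Q ^ ((n + 1).choose 2) ≤ Q ^ (n.choose 2) :=
      pow_le_pow_of_le_one hQ0.le hQ1.le (by rw [choose2_succ]; omega)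
    have hpow : (Q * x ^ (2 : ℕ)) ^ (n + 1) ≤ x ^ (2 : ℕ) := by
      rw [pow_succ]
      have h1 : (Q * x ^ (2 : ℕ)) ^ n ≤ 1 := pow_le_one₀ hQx hQx1
      have h2 : Q * x ^ (2 : ℕ) ≤ x ^ (2 : ℕ) := by nlinarith
      nlinarith [pow_nonneg hQx n]
    have hKnn : 0 ≤ KK Q A * KK Q Q := mul_nonneg (KK_pos Q A).le (KK_pos Q Q).le
    calc Q ^ ((n + 1).choose 2) * (Q * x ^ (2 : ℕ)) ^ (n + 1) *
          ((qPoch A Q (n + 1))⁻¹ * (qPoch Q Q (n + 1))⁻¹)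
        ≤ Q ^ ((n + 1).choose 2) * (Q * x ^ (2 : ℕ)) ^ (n + 1) * (KK Q A * KK Q Q) :=
          mul_le_mul_of_nonneg_left hinv (by positivity)
      _ ≤ Q ^ (n.choose 2) * x ^ (2 : ℕ) * (KK Q A * KK Q Q) := by
          have hmm : Q ^ ((n + 1).choose 2) * (Q * x ^ (2 : ℕ)) ^ (n + 1)
              ≤ Q ^ (n.choose 2) * x ^ (2 : ℕ) := by
            have p1 : 0 ≤ Q ^ ((n + 1).choose 2) := pow_nonneg hQ0.le _
            have p2 : 0 ≤ (Q * x ^ (2 : ℕ)) ^ (n + 1) := pow_nonneg hQx _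
            have p3 : 0 ≤ Q ^ (n.choose 2) := pow_nonneg hQ0.le _
            nlinarith
          exact mul_le_mul_of_nonneg_right hmm hKnn
      _ = Q ^ (n.choose 2) * (KK Q A * KK Q Q) * x ^ (2 : ℕ) := by ring
  have hmaj : Summable (fun n : ℕ => Q ^ (n.choose 2) * (KK Q A * KK Q Q) * x ^ (2 : ℕ)) :=
    ((summable_qchoose1 hQ0 hQ1).mul_right _).mul_right _
  have hnorm : Summable (fun n : ℕ => ‖jvt q v x (n + 1)‖) :=
    Summable.of_nonneg_of_le (fun n => norm_nonneg _) hterm hmaj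
  calc |jv q v x - 1| = ‖∑' n : ℕ, jvt q v x (n + 1)‖ := by rw [hEe, Real.norm_eq_abs]
    _ ≤ ∑' n : ℕ, ‖jvt q v x (n + 1)‖ := norm_tsum_le_tsum_norm hnorm
    _ ≤ ∑' n : ℕ, Q ^ (n.choose 2) * (KK Q A * KK Q Q) * x ^ (2 : ℕ) :=
        Summable.tsum_le_tsum hterm hnorm hmaj
    _ = (∑' n : ℕ, Q ^ (n.choose 2) * (KK Q A * KK Q Q)) * x ^ (2 : ℕ) := tsum_mul_right
    _ = (∑' n : ℕ, Q ^ (n.choose 2)) * (KK Q A * KK Q Q) * x ^ (2 : ℕ) := by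
        rw [tsum_mul_right]

lemma zpow_tendsto_atTop {r : ℝ} (h0 : 0 < r) (h1 : r < 1) :
    Filter.Tendsto (fun t : ℤ => r ^ t) atTop (nhds 0) := by
  have hN := tendsto_pow_atTop_nhds_zero_of_lt_one h0.le h1
  have hT : Filter.Tendsto Int.toNat atTop atTop :=
    Filter.tendsto_atTop.2 fun b => by
      filter_upwards [Filter.eventually_ge_atTop (b : ℤ)] with t ht
      omega
  refine (hN.comp hT).congr' ?_
  filter_upwards [Filter.eventually_ge_atTop (0 : ℤ)] with t ht
  simp only [Function.comp_apply]
  rw [← zpow_natCast r t.toNat, Int.toNat_of_nonneg ht]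

include hq hq1 hv in
lemma jv_zpow_bounded : ∃ M : ℝ, 0 ≤ M ∧ ∀ t : ℤ, |jv q v ((q : ℝ) ^ t)| ≤ M := by
  have hQ0 := hQ0' hq hq1
  have hQ1 := hQ1' hq hq1
  set Q := (q : ℝ) ^ (2 : ℕ) with hQdef
  set A := q ^ (2 * v + 2) with hAdef
  have habs : 0 < |EE Q A| := abs_pos.2 (EE_A_ne hq hq1 hv)
  set C1 := (∑' n : ℕ, Q ^ (n.choose 2)) * (KK Q A * KK Q Q) with hC1
  set C2 := (KK Q Q * BB Q) * TailQA q v 0 / |EE Q A| with hC2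
  have hC1nn : 0 ≤ C1 :=
    mul_nonneg (tsum_qchoose_nonneg hQ0) (mul_nonneg (KK_pos Q A).le (KK_pos Q Q).le)
  refine ⟨max C1 C2, le_trans hC1nn (le_max_left _ _), fun t => ?_⟩
  rcases le_or_gt t (-1) with ht | ht
  · have hd := jv_decay hq hq1 hv t ht
    have htail := tail_le hq hq1 hv (-(1 + t)).toNat
    have hKB : 0 ≤ KK Q Q * BB Q := mul_nonneg (KK_pos Q Q).le (BB_nonneg hQ0)
    have h2 : |EE Q A| * |jv q v ((q : ℝ) ^ t)| ≤ (KK Q Q * BB Q) * TailQA q v 0 :=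
      hd.trans (mul_le_mul_of_nonneg_left htail hKB)
    have h3 : |jv q v ((q : ℝ) ^ t)| ≤ C2 := by
      rw [hC2, le_div_iff₀ habs]
      linarith
    exact h3.trans (le_max_right _ _)
  · have ht0 : 0 ≤ t := by omega
    have hle1 : |(q : ℝ) ^ t| ≤ 1 := by
      rw [abs_of_nonneg (zpow_pos hq t).le, show t = ((t.toNat : ℕ) : ℤ) by omega,
        zpow_natCast]
      exact pow_le_one₀ hq.le hq1.le
    exact (jv_le_one_bound hq hq1 hv hle1).trans (le_max_left _ _)

include hq hq1 hv in
lemma jv_tendsto_atBot :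
    Filter.Tendsto (fun t : ℤ => jv q v ((q : ℝ) ^ t)) atBot (nhds 0) := by
  have hQ0 := hQ0' hq hq1
  have hQ1 := hQ1' hq hq1
  set Q := (q : ℝ) ^ (2 : ℕ) with hQdef
  set A := q ^ (2 * v + 2) with hAdef
  have habs : 0 < |EE Q A| := abs_pos.2 (EE_A_ne hq hq1 hv)
  set c0 := KK Q Q * BB Q / |EE Q A| with hc0
  have hcomp : Filter.Tendsto (fun t : ℤ => (-(1 + t)).toNat) atBot atTop :=
    Filter.tendsto_atTop.2 fun b => by
      filter_upwards [Filter.eventually_le_atBot (-(1 : ℤ) - b)] with t ht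
      omega
  have hg : Filter.Tendsto (fun t : ℤ => c0 * TailQA q v ((-(1 + t)).toNat)) atBot (nhds 0) := by
    have := ((tail_tendsto hq hq1 hv).comp hcomp).const_mul c0
    simpa using this
  refine squeeze_zero_norm' ?_ hg
  filter_upwards [Filter.eventually_le_atBot (-1 : ℤ)] with t ht
  have hd := jv_decay hq hq1 hv t ht
  rw [Real.norm_eq_abs]
  rw [hc0, div_mul_eq_mul_div, le_div_iff₀ habs]
  calc |jv q v ((q : ℝ) ^ t)| * |EE Q A| = |EE Q A| * |jv q v ((q : ℝ) ^ t)| := mul_comm _ _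
    _ ≤ KK Q Q * BB Q * TailQA q v (-(1 + t)).toNat := hd

include hq hq1 hv in
lemma jv_tendsto_atTop :
    Filter.Tendsto (fun t : ℤ => jv q v ((q : ℝ) ^ t)) atTop (nhds 1) := by
  have hQ0 := hQ0' hq hq1
  have hQ1 := hQ1' hq hq1
  set Q := (q : ℝ) ^ (2 : ℕ) with hQdef
  set A := q ^ (2 * v + 2) with hAdef
  set C1 := (∑' n : ℕ, Q ^ (n.choose 2)) * (KK Q A * KK Q Q) with hC1
  rw [← tendsto_sub_nhds_zero_iff]
  have hg : Filter.Tendsto (fun t : ℤ => C1 * Q ^ t) atTop (nhds 0) := by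
    have := (zpow_tendsto_atTop hQ0 hQ1).const_mul C1
    simpa using this
  refine squeeze_zero_norm' ?_ hg
  filter_upwards [Filter.eventually_ge_atTop (0 : ℤ)] with t ht
  have hle1 : |(q : ℝ) ^ t| ≤ 1 := by
    rw [abs_of_nonneg (zpow_pos hq t).le, show t = ((t.toNat : ℕ) : ℤ) by omega,
      zpow_natCast]
    exact pow_le_one₀ hq.le hq1.le
  have hb := jv_sub_one_bound hq hq1 hv hle1
  rw [Real.norm_eq_abs]
  calc |jv q v ((q : ℝ) ^ t) - 1| ≤ C1 * ((q : ℝ) ^ t) ^ (2 : ℕ) := hb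
    _ = C1 * Q ^ t := by rw [sq_zpow hq t]

end qv

end QBessel

/-- for `f ∈ L_{q,1,v}` the q-Bessel Fourier transform is well defined,
tends to `0` at infinity and extends continuously to `0`. -/
theorem Fqv_welldefined_C0 (q v : ℝ) (hq : 0 < q) (hq1 : q < 1) (hv : -1 < v)
    (f : ℝ → ℝ) (hf : MemLqpv q v 1 f) :
    (∀ x ∈ Rq q,
        JacksonSummable q (fun t => f t * jv q v (x * t) * t ^ (2 * v + 1))) ∧
    Filter.Tendsto (fun n : ℤ => Fqv q v f (q ^ n)) Filter.atBot (nhds 0) ∧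
    ∃ L : ℝ, Filter.Tendsto (fun n : ℤ => Fqv q v f (q ^ n)) Filter.atTop (nhds L) := by
  classical
  have hq0' : (q : ℝ) ≠ 0 := ne_of_gt hq
  obtain ⟨M, hM0, hMb⟩ := QBessel.jv_zpow_bounded hq hq1 hv
  -- restatement of the integrability assumption
  have hf' : Summable (fun m : ℤ => (q : ℝ) ^ m * (|f ((q : ℝ) ^ m)| * ((q : ℝ) ^ m) ^ (2 * v + 1))) := by
    have h0 : Summable (fun m : ℤ =>
        (q : ℝ) ^ m * |(|f ((q : ℝ) ^ m)| ^ (1 : ℝ) * ((q : ℝ) ^ m) ^ (2 * v + 1))|) := hf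
    refine h0.congr fun m => ?_
    have hqm : (0:ℝ) < (q : ℝ) ^ m := zpow_pos hq m
    have hrp : (0:ℝ) ≤ ((q : ℝ) ^ m) ^ (2 * v + 1) := Real.rpow_nonneg hqm.le _
    rw [Real.rpow_one, abs_of_nonneg (mul_nonneg (abs_nonneg _) hrp)]
  set bound : ℤ → ℝ :=
    fun m => M * ((q : ℝ) ^ m * (|f ((q : ℝ) ^ m)| * ((q : ℝ) ^ m) ^ (2 * v + 1))) with hbdef
  have hbound_sum : Summable bound := hf'.mul_left M
  set G : ℤ → ℤ → ℝ := fun n m => (q : ℝ) ^ m *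
      (f ((q : ℝ) ^ m) * jv q v ((q : ℝ) ^ n * (q : ℝ) ^ m) * ((q : ℝ) ^ m) ^ (2 * v + 1))
    with hGdef
  have key_bound : ∀ i m : ℤ, |G i m| ≤ bound m := by
    intro i m
    have hqm : (0:ℝ) < (q : ℝ) ^ m := zpow_pos hq m
    have hrp : (0:ℝ) ≤ ((q : ℝ) ^ m) ^ (2 * v + 1) := Real.rpow_nonneg hqm.le _
    have h1 : (q : ℝ) ^ i * (q : ℝ) ^ m = (q : ℝ) ^ (i + m) := (zpow_add₀ hq0' i m).symm
    have h2 : |G i m| = ((q : ℝ) ^ m * (|f ((q : ℝ) ^ m)| * ((q : ℝ) ^ m) ^ (2 * v + 1))) *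
        |jv q v ((q : ℝ) ^ (i + m))| := by
      rw [hGdef]
      simp only []
      rw [h1, abs_mul, abs_mul, abs_mul, abs_of_nonneg hqm.le, abs_of_nonneg hrp]
      ring
    rw [h2, hbdef]
    have hX : (0:ℝ) ≤ (q : ℝ) ^ m * (|f ((q : ℝ) ^ m)| * ((q : ℝ) ^ m) ^ (2 * v + 1)) :=
      mul_nonneg hqm.le (mul_nonneg (abs_nonneg _) hrp)
    calc ((q : ℝ) ^ m * (|f ((q : ℝ) ^ m)| * ((q : ℝ) ^ m) ^ (2 * v + 1))) *
          |jv q v ((q : ℝ) ^ (i + m))|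
        ≤ ((q : ℝ) ^ m * (|f ((q : ℝ) ^ m)| * ((q : ℝ) ^ m) ^ (2 * v + 1))) * M :=
          mul_le_mul_of_nonneg_left (hMb (i + m)) hX
      _ = M * ((q : ℝ) ^ m * (|f ((q : ℝ) ^ m)| * ((q : ℝ) ^ m) ^ (2 * v + 1))) := mul_comm _ _
  have hFqv : ∀ n : ℤ, Fqv q v f ((q : ℝ) ^ n) = cqv q v * ((1 - q) * ∑' m : ℤ, G n m) :=
    fun n => rfl
  refine ⟨?_, ?_, ?_⟩
  · -- Part 1: absolute convergence
    rintro x ⟨i, rfl⟩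
    unfold JacksonSummable
    refine Summable.of_nonneg_of_le
      (fun m => mul_nonneg (zpow_pos hq m).le (abs_nonneg _)) (fun m => ?_) hbound_sum
    have hqm : (0:ℝ) < (q : ℝ) ^ m := zpow_pos hq m
    have he : (q : ℝ) ^ m * |f ((q : ℝ) ^ m) * jv q v ((q : ℝ) ^ i * (q : ℝ) ^ m) *
        ((q : ℝ) ^ m) ^ (2 * v + 1)| = |G i m| := by
      rw [hGdef]
      simp only []
      rw [abs_mul ((q : ℝ) ^ m), abs_of_nonneg hqm.le]
    rw [he]
    exact key_bound i m
  · -- Part 2: decay at infinity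
    have hlim : ∀ m : ℤ, Filter.Tendsto (fun n : ℤ => G n m) Filter.atBot (nhds 0) := by
      intro m
      have hshift : Filter.Tendsto (fun n : ℤ => n + m) Filter.atBot Filter.atBot :=
        Filter.tendsto_atBot_add_const_right _ m Filter.tendsto_id
      have hj : Filter.Tendsto (fun n : ℤ => jv q v ((q : ℝ) ^ (n + m)))
          Filter.atBot (nhds 0) := (QBessel.jv_tendsto_atBot hq hq1 hv).comp hshift
      have h1 : Filter.Tendsto (fun n : ℤ => (q : ℝ) ^ m *
          (f ((q : ℝ) ^ m) * jv q v ((q : ℝ) ^ (n + m)) * ((q : ℝ) ^ m) ^ (2 * v + 1)))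
          Filter.atBot (nhds 0) := by
        have := (((hj.const_mul (f ((q : ℝ) ^ m))).mul_const
          (((q : ℝ) ^ m) ^ (2 * v + 1))).const_mul ((q : ℝ) ^ m))
        simpa using this
      refine h1.congr fun n => ?_
      rw [hGdef]
      simp only []
      rw [zpow_add₀ hq0' n m]
    have h2 := tendsto_tsum_of_dominated_convergence (𝓕 := Filter.atBot)
      (f := G) (g := fun _ : ℤ => (0:ℝ)) (bound := bound) hbound_sum hlim
      (Filter.Eventually.of_forall fun n m => by
        rw [Real.norm_eq_abs]; exact key_bound n m)
    have h3 : Filter.Tendsto (fun n : ℤ => ∑' m : ℤ, G n m) Filter.atBot (nhds 0) := by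
      simpa [tsum_zero] using h2
    have h4 := (h3.const_mul (1 - q)).const_mul (cqv q v)
    simp only [mul_zero] at h4
    refine h4.congr fun n => ?_
    rw [hFqv n]
  · -- Part 3: continuous extension to zero
    refine ⟨cqv q v * ((1 - q) * ∑' m : ℤ, (q : ℝ) ^ m *
      (f ((q : ℝ) ^ m) * 1 * ((q : ℝ) ^ m) ^ (2 * v + 1))), ?_⟩
    have hlim : ∀ m : ℤ, Filter.Tendsto (fun n : ℤ => G n m) Filter.atTop
        (nhds ((q : ℝ) ^ m * (f ((q : ℝ) ^ m) * 1 * ((q : ℝ) ^ m) ^ (2 * v + 1)))) := by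
      intro m
      have hshift : Filter.Tendsto (fun n : ℤ => n + m) Filter.atTop Filter.atTop :=
        Filter.tendsto_atTop_add_const_right _ m Filter.tendsto_id
      have hj : Filter.Tendsto (fun n : ℤ => jv q v ((q : ℝ) ^ (n + m)))
          Filter.atTop (nhds 1) := (QBessel.jv_tendsto_atTop hq hq1 hv).comp hshift
      have h1 := (((hj.const_mul (f ((q : ℝ) ^ m))).mul_const
        (((q : ℝ) ^ m) ^ (2 * v + 1))).const_mul ((q : ℝ) ^ m))
      refine h1.congr fun n => ?_
      rw [hGdef]
      simp only []
      rw [zpow_add₀ hq0' n m]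
    have h2 := tendsto_tsum_of_dominated_convergence (𝓕 := Filter.atTop)
      (f := G) (g := fun m : ℤ => (q : ℝ) ^ m *
        (f ((q : ℝ) ^ m) * 1 * ((q : ℝ) ^ m) ^ (2 * v + 1)))
      (bound := bound) hbound_sum hlim
      (Filter.Eventually.of_forall fun n m => by
        rw [Real.norm_eq_abs]; exact key_bound n m)
    have h4 := (h2.const_mul (1 - q)).const_mul (cqv q v)
    refine h4.congr fun n => ?_
    rw [hFqv n]
end
end

section
/- If f ∈ L_{q,1,v}, then for all x, y ∈ ℝ_q^+ the q-translation T_{q,x}^v f(y) is well defined (the defining series converges absolutely) and T_{q,x}^v f(y) = ∫₀^∞ f(z) D_v(x,y,z) z^{2v+1} d_q z, where D_v(x,y,z) = c_{q,v}² ∫₀^∞ j_v(xs,q²) j_v(ys,q²) j_v(zs,q²) s^{2v+1} d_q s. -/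
open scoped BigOperators

noncomputable section

set_option maxHeartbeats 1000000
namespace QB7

open Finset Filter

/-- triangular numbers -/
def tri : ℕ → ℕ
  | 0 => 0
  | n + 1 => tri n + n

lemma tri_succ (n : ℕ) : tri (n + 1) = tri n + n := rfl

lemma tri_mono : Monotone tri :=
  monotone_nat_of_le_succ fun n => by simp [tri_succ]

lemma tri_id (n : ℕ) : 2 * tri n + n = n * n := by
  induction n with
  | zero => simp [tri]
  | succ n ih =>
    have h : (n + 1) * (n + 1) = n * n + 2 * n + 1 := by ring
    rw [tri_succ, h]
    linarith

lemma mul_le_tri (N : ℕ) : ∀ k, N * k ≤ tri k + N * N := by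
  intro k
  induction k with
  | zero => simp
  | succ k ih =>
    rcases le_or_gt N k with h | h
    · have h2 : N * (k + 1) = N * k + N := by ring
      rw [h2, tri_succ]
      linarith
    · calc N * (k + 1) ≤ N * N := Nat.mul_le_mul_left N h
        _ ≤ tri (k + 1) + N * N := Nat.le_add_left _ _

section qPochLemmas

variable {p a : ℝ}

lemma qPoch_zero (a p : ℝ) : qPoch a p 0 = 1 := by simp [qPoch]

lemma qPoch_succ (a p : ℝ) (n : ℕ) : qPoch a p (n + 1) = qPoch a p n * (1 - a * p ^ n) :=
  Finset.prod_range_succ _ _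

lemma factor_pos (hp0 : 0 < p) (hp1 : p < 1) (ha0 : 0 ≤ a) (ha1 : a < 1) (k : ℕ) :
    0 < 1 - a * p ^ k := by
  have h1 : p ^ k ≤ 1 := pow_le_one₀ hp0.le hp1.le
  have h2 : 0 < p ^ k := pow_pos hp0 k
  nlinarith

lemma factor_le_one (hp0 : 0 < p) (ha0 : 0 ≤ a) (k : ℕ) : 1 - a * p ^ k ≤ 1 := by
  have h2 : 0 < p ^ k := pow_pos hp0 k
  nlinarith

lemma qPoch_pos (hp0 : 0 < p) (hp1 : p < 1) (ha0 : 0 ≤ a) (ha1 : a < 1) (n : ℕ) :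
    0 < qPoch a p n :=
  Finset.prod_pos fun k _ => factor_pos hp0 hp1 ha0 ha1 k

lemma qPoch_le_one (hp0 : 0 < p) (hp1 : p < 1) (ha0 : 0 ≤ a) (ha1 : a < 1) (n : ℕ) :
    qPoch a p n ≤ 1 :=
  Finset.prod_le_one (fun k _ => (factor_pos hp0 hp1 ha0 ha1 k).le)
    (fun k _ => factor_le_one hp0 ha0 k)

lemma qPoch_anti (hp0 : 0 < p) (hp1 : p < 1) (ha0 : 0 ≤ a) (ha1 : a < 1) {m n : ℕ}
    (h : m ≤ n) : qPoch a p n ≤ qPoch a p m := by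
  induction n, h using Nat.le_induction with
  | base => exact le_rfl
  | succ n hmn ih =>
    rw [qPoch_succ]
    calc qPoch a p n * (1 - a * p ^ n) ≤ qPoch a p n * 1 :=
          mul_le_mul_of_nonneg_left (factor_le_one hp0 ha0 n) (qPoch_pos hp0 hp1 ha0 ha1 n).le
      _ = qPoch a p n := mul_one _
      _ ≤ qPoch a p m := ih

lemma qPoch_add (a p : ℝ) (N m : ℕ) :
    qPoch a p (N + m) = qPoch a p N * qPoch (a * p ^ N) p m := by
  induction m with
  | zero => simp [qPoch_zero]
  | succ m ih =>
    have h : a * p ^ N * p ^ m = a * p ^ (N + m) := by rw [pow_add]; ring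
    rw [← Nat.add_assoc, qPoch_succ, ih, qPoch_succ, h, mul_assoc]

lemma qPoch_ge (hp0 : 0 < p) (hp1 : p < 1) (ha0 : 0 ≤ a) (ha1 : a < 1) (m : ℕ) :
    1 - (∑ k ∈ Finset.range m, a * p ^ k) ≤ qPoch a p m := by
  induction m with
  | zero => simp [qPoch_zero]
  | succ m ih =>
    rw [qPoch_succ, Finset.sum_range_succ]
    have h1 : 0 < 1 - a * p ^ m := factor_pos hp0 hp1 ha0 ha1 m
    have h2 : 1 - a * p ^ m ≤ 1 := factor_le_one hp0 ha0 m
    have h3 : qPoch a p m ≤ 1 := qPoch_le_one hp0 hp1 ha0 ha1 m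
    have h4 : 0 < qPoch a p m := qPoch_pos hp0 hp1 ha0 ha1 m
    have h5 : 0 ≤ a * p ^ m := by positivity
    nlinarith

lemma sum_geom_le (hp0 : 0 < p) (hp1 : p < 1) (ha0 : 0 ≤ a) (m : ℕ) :
    ∑ k ∈ Finset.range m, a * p ^ k ≤ a * (1 - p)⁻¹ := by
  rw [← Finset.mul_sum]
  have h1 : ∑ k ∈ Finset.range m, p ^ k ≤ (1 - p)⁻¹ := by
    induction m with
    | zero =>
      simp only [Finset.range_zero, Finset.sum_empty]
      rw [inv_nonneg]
      linarith
    | succ m ih =>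
      rw [geom_sum_succ]
      have hinv : (1 - p) * (1 - p)⁻¹ = 1 := mul_inv_cancel₀ (by linarith)
      nlinarith [mul_le_mul_of_nonneg_left ih hp0.le]
  calc a * ∑ k ∈ Finset.range m, p ^ k ≤ a * (1 - p)⁻¹ :=
    mul_le_mul_of_nonneg_left h1 ha0

lemma qPoch_lower (hp0 : 0 < p) (hp1 : p < 1) (ha0 : 0 ≤ a) (ha1 : a < 1) :
    ∃ δ > 0, ∀ n, δ ≤ qPoch a p n := by
  obtain ⟨N, hN⟩ := exists_pow_lt_of_lt_one (show (0:ℝ) < (1 - p) / 2 by linarith) hp1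
  have hqp : 0 < qPoch a p N := qPoch_pos hp0 hp1 ha0 ha1 N
  refine ⟨qPoch a p N / 2, by linarith, fun n => ?_⟩
  have hb0 : 0 ≤ a * p ^ N := by positivity
  have hb1 : a * p ^ N ≤ (1 - p) / 2 := by
    have := pow_pos hp0 N
    nlinarith
  have hb2 : a * p ^ N < 1 := by linarith
  rcases le_total n N with h | h
  · have := qPoch_anti hp0 hp1 ha0 ha1 h
    have := qPoch_pos hp0 hp1 ha0 ha1 N
    linarith
  · obtain ⟨m, rfl⟩ := Nat.exists_eq_add_of_le h
    rw [qPoch_add]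
    have h1 : 1 - (∑ k ∈ Finset.range m, (a * p ^ N) * p ^ k) ≤ qPoch (a * p ^ N) p m :=
      qPoch_ge hp0 hp1 hb0 hb2 m
    have h2 : ∑ k ∈ Finset.range m, (a * p ^ N) * p ^ k ≤ (a * p ^ N) * (1 - p)⁻¹ :=
      sum_geom_le hp0 hp1 hb0 m
    have h3 : (a * p ^ N) * (1 - p)⁻¹ ≤ 1 / 2 := by
      have h4 : (0:ℝ) < 1 - p := by linarith
      have hinv : (1 - p) * (1 - p)⁻¹ = 1 := mul_inv_cancel₀ (by linarith)
      nlinarith [mul_le_mul_of_nonneg_right hb1 (inv_nonneg.mpr h4.le)]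
    have h5 : (1:ℝ) / 2 ≤ qPoch (a * p ^ N) p m := by linarith
    calc qPoch a p N / 2 = qPoch a p N * (1 / 2) := by ring
      _ ≤ qPoch a p N * qPoch (a * p ^ N) p m := mul_le_mul_of_nonneg_left h5 hqp.le

end qPochLemmas


section EuLemmas

open Finset Filter

variable {p : ℝ}

/-- coefficients of Euler's q-exponential series -/
def Em (p : ℝ) (m : ℕ) : ℝ := (-1) ^ m * p ^ tri m / qPoch p p m

/-- Euler's q-exponential series, equal to `(w; p)_∞`. -/
def Eu (p w : ℝ) : ℝ := ∑' m : ℕ, Em p m * w ^ m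

lemma summable_tri_mul (hp0 : 0 < p) (hp1 : p < 1) {A : ℝ} (hA : 0 ≤ A) :
    Summable (fun m : ℕ => p ^ tri m * A ^ m) := by
  apply summable_of_ratio_norm_eventually_le (r := 1 / 2) (by norm_num)
  have h0 : Tendsto (fun m : ℕ => p ^ m * A) atTop (nhds 0) := by
    simpa using (tendsto_pow_atTop_nhds_zero_of_lt_one hp0.le hp1).mul_const A
  filter_upwards [h0.eventually_le_const (by norm_num : (0:ℝ) < 1 / 2)] with m hm
  have he : p ^ tri (m + 1) * A ^ (m + 1) = (p ^ m * A) * (p ^ tri m * A ^ m) := by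
    rw [tri_succ, pow_add, pow_succ]
    ring
  have h1 : (0:ℝ) ≤ p ^ tri m * A ^ m := by positivity
  rw [Real.norm_eq_abs, Real.norm_eq_abs, he, abs_of_nonneg (by positivity),
    abs_of_nonneg h1]
  exact mul_le_mul_of_nonneg_right hm h1

lemma summable_of_le_tri (hp0 : 0 < p) (hp1 : p < 1) {g : ℕ → ℝ} {A C : ℝ} (hA : 0 ≤ A)
    (h : ∀ m, |g m| ≤ C * (p ^ tri m * A ^ m)) : Summable g :=
  Summable.of_abs (Summable.of_nonneg_of_le (fun m => abs_nonneg _) h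
    (((summable_tri_mul hp0 hp1 hA)).mul_left C))

lemma Em_abs_le (hp0 : 0 < p) (hp1 : p < 1) {δ : ℝ} (hδ : 0 < δ)
    (hδle : ∀ n, δ ≤ qPoch p p n) (m : ℕ) : |Em p m| ≤ δ⁻¹ * p ^ tri m := by
  have hq : 0 < qPoch p p m := lt_of_lt_of_le hδ (hδle m)
  have h1 : |Em p m| = p ^ tri m / qPoch p p m := by
    rw [Em, abs_div, abs_mul, abs_pow, abs_neg, abs_one, one_pow, one_mul,
      abs_of_pos (pow_pos hp0 _), abs_of_pos hq]
  rw [h1, div_eq_mul_inv, mul_comm]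
  gcongr
  exact hδle m

lemma summable_Em_mul (hp0 : 0 < p) (hp1 : p < 1) (w : ℝ) :
    Summable (fun m : ℕ => Em p m * w ^ m) := by
  obtain ⟨δ, hδ, hδle⟩ := qPoch_lower hp0 hp1 hp0.le hp1
  apply summable_of_le_tri hp0 hp1 (abs_nonneg w) (C := δ⁻¹)
  intro m
  rw [abs_mul, abs_pow]
  calc |Em p m| * |w| ^ m ≤ (δ⁻¹ * p ^ tri m) * |w| ^ m :=
        mul_le_mul_of_nonneg_right (Em_abs_le hp0 hp1 hδ hδle m) (by positivity)
    _ = δ⁻¹ * (p ^ tri m * |w| ^ m) := by ring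

lemma Em_zero : Em p 0 = 1 := by simp [Em, tri, qPoch_zero]

lemma Em_succ (hp0 : 0 < p) (hp1 : p < 1) (m : ℕ) :
    Em p (m + 1) * (1 - p * p ^ m) = -(Em p m * p ^ m) := by
  have h1 : qPoch p p m ≠ 0 := (qPoch_pos hp0 hp1 hp0.le hp1 m).ne'
  have h2 : (1 : ℝ) - p * p ^ m ≠ 0 := (factor_pos hp0 hp1 hp0.le hp1 m).ne'
  rw [Em, Em, qPoch_succ, tri_succ, pow_add, pow_succ]
  field_simp
  ring

lemma Eu_funEq (hp0 : 0 < p) (hp1 : p < 1) (w : ℝ) : Eu p w = (1 - w) * Eu p (p * w) := by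
  have hsw : Summable fun m : ℕ => Em p m * w ^ m := summable_Em_mul hp0 hp1 w
  have hspw : Summable fun m : ℕ => Em p m * (p * w) ^ m := summable_Em_mul hp0 hp1 (p * w)
  have hd : Summable fun m : ℕ => Em p m * (p * w) ^ m - Em p m * w ^ m := hspw.sub hsw
  have hEu : Eu p (p * w) - Eu p w = ∑' m : ℕ, (Em p m * (p * w) ^ m - Em p m * w ^ m) :=
    (Summable.tsum_sub hspw hsw).symm
  rw [Summable.tsum_eq_zero_add hd] at hEu
  have h0 : Em p 0 * (p * w) ^ 0 - Em p 0 * w ^ 0 = 0 := by simp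
  have hsucc : ∀ k : ℕ, Em p (k + 1) * (p * w) ^ (k + 1) - Em p (k + 1) * w ^ (k + 1)
      = (Em p k * (p * w) ^ k) * w := by
    intro k
    have e := Em_succ hp0 hp1 k
    have hmp : (p * w) ^ (k + 1) = p ^ (k + 1) * w ^ (k + 1) := mul_pow _ _ _
    have hmp2 : (p * w) ^ k = p ^ k * w ^ k := mul_pow _ _ _
    rw [hmp, hmp2, pow_succ, pow_succ]
    linear_combination (-(w ^ k * w)) * e
  have hshift : ∑' k : ℕ, (Em p (k + 1) * (p * w) ^ (k + 1) - Em p (k + 1) * w ^ (k + 1))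
      = Eu p (p * w) * w := by
    rw [Eu, ← tsum_mul_right]
    exact tsum_congr hsucc
  rw [h0, zero_add, hshift] at hEu
  have : Eu p (p * w) - Eu p w = Eu p (p * w) * w := hEu
  linear_combination -this

lemma Eu_iter (hp0 : 0 < p) (hp1 : p < 1) (w : ℝ) (n : ℕ) :
    Eu p w = qPoch w p n * Eu p (w * p ^ n) := by
  induction n with
  | zero => simp [qPoch_zero]
  | succ n ih =>
    rw [ih, Eu_funEq hp0 hp1 (w * p ^ n), qPoch_succ]
    have h1 : p * (w * p ^ n) = w * p ^ (n + 1) := by rw [pow_succ]; ring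
    rw [h1]
    ring

lemma Eu_eq_zero (hp0 : 0 < p) (hp1 : p < 1) {a : ℝ} {j : ℕ} (h : a * p ^ j = 1) :
    Eu p a = 0 := by
  rw [Eu_iter hp0 hp1 a (j + 1)]
  have : qPoch a p (j + 1) = 0 :=
    Finset.prod_eq_zero (Finset.self_mem_range_succ j) (by rw [h]; ring)
  rw [this, zero_mul]

lemma Eu_abs_le (hp0 : 0 < p) (hp1 : p < 1) {w : ℝ} (hw : |w| ≤ 1) :
    |Eu p w| ≤ ∑' m : ℕ, |Em p m| := by
  have hsw : Summable fun m : ℕ => Em p m * w ^ m := summable_Em_mul hp0 hp1 w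
  have habs : Summable fun m : ℕ => |Em p m * w ^ m| := hsw.abs
  have hEm : Summable fun m : ℕ => |Em p m| := (summable_Em_mul hp0 hp1 1).abs.congr
    (fun m => by rw [one_pow, mul_one])
  calc |Eu p w| ≤ ∑' m : ℕ, |Em p m * w ^ m| := by
        have := norm_tsum_le_tsum_norm (f := fun m : ℕ => Em p m * w ^ m)
          (by simpa only [Real.norm_eq_abs] using habs)
        simpa only [Real.norm_eq_abs, Eu] using this
    _ ≤ ∑' m : ℕ, |Em p m| := by
        apply Summable.tsum_le_tsum _ habs hEm
        intro m
        rw [abs_mul, abs_pow]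
        have h1 : |w| ^ m ≤ 1 := pow_le_one₀ (abs_nonneg w) hw
        nlinarith [abs_nonneg (Em p m)]

lemma summable_Em_abs (hp0 : 0 < p) (hp1 : p < 1) : Summable fun m : ℕ => |Em p m| :=
  (summable_Em_mul hp0 hp1 1).abs.congr (fun m => by rw [one_pow, mul_one])

lemma Eu_pos (hp0 : 0 < p) (hp1 : p < 1) {w : ℝ} (hw0 : 0 ≤ w) (hw1 : w < 1) :
    0 < Eu p w := by
  set K : ℝ := ∑' m : ℕ, |Em p (m + 1)| with hK
  have hKsum : Summable fun m : ℕ => |Em p (m + 1)| :=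
    (summable_nat_add_iff 1).mpr (summable_Em_abs hp0 hp1)
  have hK0 : 0 ≤ K := tsum_nonneg fun m => abs_nonneg _
  obtain ⟨N, hN⟩ := exists_pow_lt_of_lt_one (show (0:ℝ) < 1 / (K + 1) by positivity) hp1
  rw [Eu_iter hp0 hp1 w N]
  have hu0 : 0 ≤ w * p ^ N := by positivity
  have hu1 : w * p ^ N < 1 / (K + 1) := by
    have hpN : 0 < p ^ N := pow_pos hp0 N
    nlinarith
  set u := w * p ^ N with hu
  have hsu : Summable fun m : ℕ => Em p m * u ^ m := summable_Em_mul hp0 hp1 u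
  have hEuu : Eu p u = 1 + ∑' m : ℕ, Em p (m + 1) * u ^ (m + 1) := by
    rw [Eu, Summable.tsum_eq_zero_add hsu, Em_zero, pow_zero, mul_one]
  have hu1' : u ≤ 1 := by
    have : 1 / (K + 1) ≤ 1 := by
      rw [div_le_one (by positivity)]
      linarith
    linarith
  have htail : |∑' m : ℕ, Em p (m + 1) * u ^ (m + 1)| ≤ K * u := by
    have hs2 : Summable fun m : ℕ => Em p (m + 1) * u ^ (m + 1) :=
      (summable_nat_add_iff 1).mpr hsu
    calc |∑' m : ℕ, Em p (m + 1) * u ^ (m + 1)| ≤ ∑' m : ℕ, |Em p (m + 1) * u ^ (m + 1)| := by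
          have := norm_tsum_le_tsum_norm (f := fun m : ℕ => Em p (m + 1) * u ^ (m + 1))
            (by simpa only [Real.norm_eq_abs] using hs2.abs)
          simpa only [Real.norm_eq_abs] using this
      _ ≤ ∑' m : ℕ, |Em p (m + 1)| * u := by
          apply Summable.tsum_le_tsum _ hs2.abs (hKsum.mul_right u)
          intro m
          rw [abs_mul, abs_pow, abs_of_nonneg hu0]
          have h1 : u ^ (m + 1) ≤ u := by
            calc u ^ (m + 1) = u ^ m * u := pow_succ u m
              _ ≤ 1 * u := mul_le_mul_of_nonneg_right (pow_le_one₀ hu0 hu1') hu0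
              _ = u := one_mul u
          exact mul_le_mul_of_nonneg_left h1 (abs_nonneg _)
      _ = K * u := by rw [tsum_mul_right]
  have hKu : K * u < 1 := by
    have h2 : K * (1 / (K + 1)) < 1 := by
      rw [mul_one_div, div_lt_one (by positivity)]
      linarith
    calc K * u ≤ K * (1 / (K + 1)) := mul_le_mul_of_nonneg_left hu1.le hK0
      _ < 1 := h2
  have hEupos : 0 < Eu p u := by
    rw [hEuu]
    have := abs_le.mp htail
    linarith
  exact mul_pos (qPoch_pos hp0 hp1 hw0 hw1 N) hEupos

lemma Eu_sym (hp0 : 0 < p) (hp1 : p < 1) (α β : ℝ) :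
    ∑' n : ℕ, Em p n * α ^ n * Eu p (β * p ^ n)
      = ∑' n : ℕ, Em p n * β ^ n * Eu p (α * p ^ n) := by
  obtain ⟨δ, hδ, hδle⟩ := qPoch_lower hp0 hp1 hp0.le hp1
  set G : ℕ → ℕ → ℝ := fun n m => Em p n * Em p m * α ^ n * β ^ m * p ^ (n * m) with hG
  have hbound : ∀ n m : ℕ, |G n m| ≤ (δ⁻¹ * (p ^ tri n * |α| ^ n)) * (δ⁻¹ * (p ^ tri m * |β| ^ m)) := by
    intro n m
    have h1 : |G n m| = |Em p n| * |Em p m| * |α| ^ n * |β| ^ m * p ^ (n * m) := by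
      rw [hG]
      rw [abs_mul, abs_mul, abs_mul, abs_mul, abs_pow, abs_pow, abs_pow, abs_of_pos hp0]
    rw [h1]
    have e1 := Em_abs_le hp0 hp1 hδ hδle n
    have e2 := Em_abs_le hp0 hp1 hδ hδle m
    have h2 : p ^ (n * m) ≤ 1 := pow_le_one₀ hp0.le hp1.le
    have h3 : (0:ℝ) ≤ |α| ^ n := by positivity
    have h4 : (0:ℝ) ≤ |β| ^ m := by positivity
    calc |Em p n| * |Em p m| * |α| ^ n * |β| ^ m * p ^ (n * m)
        ≤ |Em p n| * |Em p m| * |α| ^ n * |β| ^ m * 1 := by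
          apply mul_le_mul_of_nonneg_left h2
          positivity
      _ = (|Em p n| * |α| ^ n) * (|Em p m| * |β| ^ m) := by ring
      _ ≤ ((δ⁻¹ * p ^ tri n) * |α| ^ n) * ((δ⁻¹ * p ^ tri m) * |β| ^ m) := by
          apply mul_le_mul (mul_le_mul_of_nonneg_right e1 h3)
            (mul_le_mul_of_nonneg_right e2 h4) (by positivity) (by positivity)
      _ = (δ⁻¹ * (p ^ tri n * |α| ^ n)) * (δ⁻¹ * (p ^ tri m * |β| ^ m)) := by ring
  have hprodsum : Summable (fun nm : ℕ × ℕ =>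
      (δ⁻¹ * (p ^ tri nm.1 * |α| ^ nm.1)) * (δ⁻¹ * (p ^ tri nm.2 * |β| ^ nm.2))) :=
    Summable.mul_of_nonneg ((summable_tri_mul hp0 hp1 (abs_nonneg α)).mul_left δ⁻¹)
      ((summable_tri_mul hp0 hp1 (abs_nonneg β)).mul_left δ⁻¹)
      (fun n => by positivity) (fun m => by positivity)
  have habs : Summable (fun nm : ℕ × ℕ => |G nm.1 nm.2|) :=
    Summable.of_nonneg_of_le (fun nm => abs_nonneg _) (fun nm => hbound nm.1 nm.2) hprodsum
  have hsumG : Summable (fun nm : ℕ × ℕ => G nm.1 nm.2) := habs.of_abs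
  have hfib1 : ∀ n : ℕ, Summable fun m : ℕ => G n m := fun n => hsumG.prod_factor n
  have hfib2 : ∀ m : ℕ, Summable fun n : ℕ => G n m := fun m => hsumG.prod_symm.prod_factor m
  have hinner1 : ∀ n : ℕ, Em p n * α ^ n * Eu p (β * p ^ n) = ∑' m : ℕ, G n m := by
    intro n
    rw [Eu, ← tsum_mul_left]
    apply tsum_congr
    intro m
    rw [hG]
    have : (β * p ^ n) ^ m = β ^ m * p ^ (n * m) := by
      rw [mul_pow, ← pow_mul]
    rw [this]
    ring
  have hinner2 : ∀ m : ℕ, Em p m * β ^ m * Eu p (α * p ^ m) = ∑' n : ℕ, G n m := by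
    intro m
    rw [Eu, ← tsum_mul_left]
    apply tsum_congr
    intro n
    rw [hG]
    have : (α * p ^ m) ^ n = α ^ n * p ^ (n * m) := by
      rw [mul_pow, ← pow_mul, Nat.mul_comm m n]
    rw [this]
    ring
  calc ∑' n : ℕ, Em p n * α ^ n * Eu p (β * p ^ n) = ∑' (n : ℕ) (m : ℕ), G n m :=
        tsum_congr hinner1
    _ = ∑' (m : ℕ) (n : ℕ), G n m :=
        (Summable.tsum_comm' (f := G) hsumG hfib1 hfib2).symm
    _ = ∑' m : ℕ, Em p m * β ^ m * Eu p (α * p ^ m) := (tsum_congr hinner2).symm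

end EuLemmas
section JVLemmas

open Finset Filter

variable {q v : ℝ}

lemma nat_tri_exp (n : ℕ) : n * (n + 1) = 2 * tri n + 2 * n := by
  have h := tri_id n
  calc n * (n + 1) = n * n + n := by ring
    _ = (2 * tri n + n) + n := by rw [h]
    _ = 2 * tri n + 2 * n := by ring

lemma q_pow_tri (q : ℝ) (n : ℕ) : q ^ (n * (n + 1)) = (q ^ 2) ^ tri n * (q ^ 2) ^ n := by
  rw [← pow_mul, ← pow_mul, ← pow_add, nat_tri_exp]

lemma hc0' (hq : 0 < q) : (0:ℝ) < q ^ (2 * v + 2) := Real.rpow_pos_of_pos hq _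

lemma hc1' (hq : 0 < q) (hq1 : q < 1) (hv : -1 < v) : q ^ (2 * v + 2) < 1 :=
  Real.rpow_lt_one hq.le hq1 (by linarith)

lemma jv_term_abs {n : ℕ} {x : ℝ} (hq : 0 < q)
    (hQc : 0 < qPoch (q ^ (2 * v + 2)) (q ^ 2) n)
    (hQp : 0 < qPoch ((q:ℝ) ^ (2:ℕ)) (q ^ 2) n) :
    |(-1:ℝ) ^ n * q ^ (n * (n + 1)) /
      (qPoch (q ^ (2 * v + 2)) (q ^ 2) n * qPoch ((q:ℝ) ^ (2:ℕ)) (q ^ 2) n) * x ^ (2 * n)|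
    = ((q ^ 2) ^ tri n * (q ^ 2 * x ^ 2) ^ n) /
      (qPoch (q ^ (2 * v + 2)) (q ^ 2) n * qPoch ((q:ℝ) ^ (2:ℕ)) (q ^ 2) n) := by
  rw [abs_mul, abs_div, abs_mul, abs_pow, abs_pow, abs_neg, abs_one, one_pow, one_mul,
    abs_of_pos hq, abs_of_pos (mul_pos hQc hQp), q_pow_tri q n,
    show |x ^ (2*n)| = (x^2)^n from by rw [pow_mul, abs_pow, abs_of_nonneg (sq_nonneg x)],
    mul_pow]
  ring

lemma summable_jv_term (hq : 0 < q) (hq1 : q < 1) (hv : -1 < v) (x : ℝ) :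
    Summable (fun n : ℕ => (-1:ℝ) ^ n * q ^ (n * (n + 1)) /
      (qPoch (q ^ (2 * v + 2)) (q ^ 2) n * qPoch ((q:ℝ) ^ (2:ℕ)) (q ^ 2) n) * x ^ (2 * n)) := by
  have hp0 : (0:ℝ) < q ^ 2 := by positivity
  have hp1 : q ^ 2 < 1 := by nlinarith
  have hc0 : (0:ℝ) < q ^ (2 * v + 2) := hc0' hq
  have hc1 : q ^ (2 * v + 2) < 1 := hc1' hq hq1 hv
  obtain ⟨δc, hδc, hδcle⟩ := qPoch_lower hp0 hp1 hc0.le hc1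
  obtain ⟨δp, hδp, hδple⟩ := qPoch_lower hp0 hp1 hp0.le hp1
  apply summable_of_le_tri hp0 hp1 (A := q ^ 2 * x ^ 2) (C := (δc * δp)⁻¹) (by positivity)
  intro n
  have hQc := lt_of_lt_of_le hδc (hδcle n)
  have hQp := lt_of_lt_of_le hδp (hδple n)
  have habs := jv_term_abs (v := v) hq hQc hQp (x := x) (n := n)
  rw [habs]
  have hnum : (0:ℝ) ≤ (q ^ 2) ^ tri n * (q ^ 2 * x ^ 2) ^ n := by positivity
  calc ((q ^ 2) ^ tri n * (q ^ 2 * x ^ 2) ^ n) /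
        (qPoch (q ^ (2 * v + 2)) (q ^ 2) n * qPoch ((q:ℝ) ^ (2:ℕ)) (q ^ 2) n)
      ≤ ((q ^ 2) ^ tri n * (q ^ 2 * x ^ 2) ^ n) / (δc * δp) := by
        apply div_le_div_of_nonneg_left hnum (by positivity)
        exact mul_le_mul (hδcle n) (hδple n) hδp.le hQc.le
    _ = (δc * δp)⁻¹ * ((q ^ 2) ^ tri n * (q ^ 2 * x ^ 2) ^ n) := by
        rw [div_eq_mul_inv, mul_comm]

lemma Eu_mul_jv (hq : 0 < q) (hq1 : q < 1) (hv : -1 < v) (x : ℝ) :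
    Eu (q ^ 2) (q ^ (2 * v + 2)) * jv q v x
      = ∑' n : ℕ, Em (q ^ 2) n * (q ^ 2 * x ^ 2) ^ n
          * Eu (q ^ 2) (q ^ (2 * v + 2) * (q ^ 2) ^ n) := by
  have hp0 : (0:ℝ) < q ^ 2 := by positivity
  have hp1 : q ^ 2 < 1 := by nlinarith
  have hc0 : (0:ℝ) < q ^ (2 * v + 2) := hc0' hq
  have hc1 : q ^ (2 * v + 2) < 1 := hc1' hq hq1 hv
  rw [jv, ← tsum_mul_left]
  apply tsum_congr
  intro n
  have hQc : 0 < qPoch (q ^ (2 * v + 2)) (q ^ 2) n := qPoch_pos hp0 hp1 hc0.le hc1 n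
  have hQp : 0 < qPoch ((q:ℝ) ^ (2:ℕ)) (q ^ 2) n := qPoch_pos hp0 hp1 hp0.le hp1 n
  rw [Eu_iter hp0 hp1 (q ^ (2 * v + 2)) n]
  rw [Em, q_pow_tri, mul_pow, pow_mul x 2 n]
  have hQp' : qPoch ((q:ℝ) ^ (2:ℕ)) (q ^ 2) n = qPoch (q ^ 2) (q ^ 2) n := by norm_num
  rw [hQp'] at hQp ⊢
  field_simp
  try ring
  have key : ∀ A E X : ℝ, A ≠ 0 → A * E * X / A = E * X := fun A E X h => by field_simp
  exact key _ _ _ (qPoch_pos hp0 hp1 (Real.rpow_pos_of_pos hq _).le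
    (by convert hc1 using 2; ring) n).ne'

lemma jv_small (hq : 0 < q) (hq1 : q < 1) (hv : -1 < v) :
    ∃ M > 0, ∀ x : ℝ, x ^ 2 ≤ 1 → |jv q v x| ≤ M := by
  have hp0 : (0:ℝ) < q ^ 2 := by positivity
  have hp1 : q ^ 2 < 1 := by nlinarith
  have hc0 : (0:ℝ) < q ^ (2 * v + 2) := hc0' hq
  have hc1 : q ^ (2 * v + 2) < 1 := hc1' hq hq1 hv
  obtain ⟨δc, hδc, hδcle⟩ := qPoch_lower hp0 hp1 hc0.le hc1
  obtain ⟨δp, hδp, hδple⟩ := qPoch_lower hp0 hp1 hp0.le hp1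
  set M : ℝ := (δc * δp)⁻¹ * ∑' n : ℕ, (q ^ 2) ^ tri n * (q ^ 2) ^ n with hM
  have hsum : Summable (fun n : ℕ => (q ^ 2) ^ tri n * (q ^ 2) ^ n) := by
    have := summable_tri_mul hp0 hp1 (A := q ^ 2) hp0.le
    exact this
  have hMpos : 0 < M := by
    rw [hM]
    apply mul_pos (by positivity)
    have h0 : (0:ℝ) < (q ^ 2) ^ tri 0 * (q ^ 2) ^ 0 := by positivity
    calc (0:ℝ) < (q ^ 2) ^ tri 0 * (q ^ 2) ^ 0 := h0
      _ ≤ ∑' n : ℕ, (q ^ 2) ^ tri n * (q ^ 2) ^ n := by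
        apply Summable.le_tsum hsum 0
        intro m _
        positivity
  refine ⟨M, hMpos, fun x hx => ?_⟩
  have hterm := summable_jv_term hq hq1 hv (q := q) (v := v) x
  have h1 : |jv q v x| ≤ ∑' n : ℕ, |(-1:ℝ) ^ n * q ^ (n * (n + 1)) /
      (qPoch (q ^ (2 * v + 2)) (q ^ 2) n * qPoch ((q:ℝ) ^ (2:ℕ)) (q ^ 2) n) * x ^ (2 * n)| := by
    rw [jv]
    have := norm_tsum_le_tsum_norm (f := fun n : ℕ => (-1:ℝ) ^ n * q ^ (n * (n + 1)) /
      (qPoch (q ^ (2 * v + 2)) (q ^ 2) n * qPoch ((q:ℝ) ^ (2:ℕ)) (q ^ 2) n) * x ^ (2 * n))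
      (by simpa only [Real.norm_eq_abs] using hterm.abs)
    simpa only [Real.norm_eq_abs] using this
  have h2 : ∑' n : ℕ, |(-1:ℝ) ^ n * q ^ (n * (n + 1)) /
      (qPoch (q ^ (2 * v + 2)) (q ^ 2) n * qPoch ((q:ℝ) ^ (2:ℕ)) (q ^ 2) n) * x ^ (2 * n)|
      ≤ ∑' n : ℕ, (δc * δp)⁻¹ * ((q ^ 2) ^ tri n * (q ^ 2) ^ n) := by
    apply Summable.tsum_le_tsum _ hterm.abs (hsum.mul_left _)
    intro n
    have hQc := lt_of_lt_of_le hδc (hδcle n)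
    have hQp := lt_of_lt_of_le hδp (hδple n)
    have habs := jv_term_abs (v := v) hq hQc hQp (x := x) (n := n)
    rw [habs]
    have hx0 : (0:ℝ) ≤ x ^ 2 := sq_nonneg x
    have hle : (q ^ 2 * x ^ 2) ^ n ≤ (q ^ 2) ^ n := by
      apply pow_le_pow_left₀ (by positivity)
      nlinarith
    calc ((q ^ 2) ^ tri n * (q ^ 2 * x ^ 2) ^ n) /
          (qPoch (q ^ (2 * v + 2)) (q ^ 2) n * qPoch ((q:ℝ) ^ (2:ℕ)) (q ^ 2) n)
        ≤ ((q ^ 2) ^ tri n * (q ^ 2) ^ n) / (δc * δp) := by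
          apply div_le_div₀ (by positivity) _ (by positivity)
            (mul_le_mul (hδcle n) (hδple n) hδp.le hQc.le)
          exact mul_le_mul_of_nonneg_left hle (by positivity)
      _ = (δc * δp)⁻¹ * ((q ^ 2) ^ tri n * (q ^ 2) ^ n) := by
          rw [div_eq_mul_inv, mul_comm]
  calc |jv q v x| ≤ _ := h1
    _ ≤ ∑' n : ℕ, (δc * δp)⁻¹ * ((q ^ 2) ^ tri n * (q ^ 2) ^ n) := h2
    _ = M := by rw [hM, tsum_mul_left]

end JVLemmas
section Decay

open Finset Filter

variable {q v : ℝ}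

lemma jv_decay (hq : 0 < q) (hq1 : q < 1) (hv : -1 < v) :
    ∃ C > 0, ∀ k : ℕ, |jv q v ((q:ℝ) ^ (-(k:ℤ)))| ≤ C * (q * q ^ (2 * v + 2)) ^ k := by
  have hp0 : (0:ℝ) < q ^ 2 := by positivity
  have hp1 : q ^ 2 < 1 := by nlinarith
  have hc0 : (0:ℝ) < q ^ (2 * v + 2) := hc0' hq
  have hc1 : q ^ (2 * v + 2) < 1 := hc1' hq hq1 hv
  obtain ⟨δp, hδp, hδple⟩ := qPoch_lower hp0 hp1 hp0.le hp1
  set c : ℝ := q ^ (2 * v + 2) with hcdef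
  set P : ℝ := q ^ 2 with hPdef
  have h1c : (0:ℝ) < 1 - c := by linarith
  have hEuc : 0 < Eu P c := Eu_pos hp0 hp1 hc0.le hc1
  set K0 : ℝ := ∑' m : ℕ, |Em P m| with hK0
  have hK0sum : Summable fun m : ℕ => |Em P m| := summable_Em_abs hp0 hp1
  have hK0pos : 0 < K0 := by
    have h01 : (0:ℝ) < |Em P 0| := by rw [Em_zero]; norm_num
    calc (0:ℝ) < |Em P 0| := h01
      _ ≤ K0 := Summable.le_tsum hK0sum 0 (fun m _ => abs_nonneg _)
  obtain ⟨N, hN⟩ := exists_pow_lt_of_lt_one hq hp1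
  set C : ℝ := (Eu P c)⁻¹ * (δp⁻¹ * K0 * (1 - c)⁻¹ * (P ^ (N * N))⁻¹) with hCdef
  have hCpos : 0 < C := by
    rw [hCdef]
    positivity
  refine ⟨C, hCpos, fun k => ?_⟩
  have hq0 : (q:ℝ) ≠ 0 := hq.ne'
  have hz : P * ((q:ℝ) ^ (-(k:ℤ))) ^ 2 = P ^ ((1:ℤ) - k) := by
    rw [hPdef]
    rw [← zpow_natCast ((q:ℝ) ^ (-(k:ℤ))) 2, ← zpow_mul, ← zpow_natCast q 2, ← zpow_mul,
      ← zpow_add₀ hq0]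
    congr 1
    ring
  have h1 : Eu P c * jv q v ((q:ℝ) ^ (-(k:ℤ)))
      = ∑' n : ℕ, Em P n * (P ^ ((1:ℤ) - k)) ^ n * Eu P (c * P ^ n) := by
    rw [Eu_mul_jv hq hq1 hv]
    apply tsum_congr
    intro n
    rw [hz]
  rw [Eu_sym hp0 hp1] at h1
  have hvan : ∀ m : ℕ, m < k → Em P m * c ^ m * Eu P (P ^ ((1:ℤ) - k) * P ^ m) = 0 := by
    intro m hm
    have hone : (P ^ ((1:ℤ) - k) * P ^ m) * P ^ (k - 1 - m : ℕ) = 1 := by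
      have hj : ((1:ℤ) - k) + m + ((k - 1 - m : ℕ) : ℤ) = 0 := by
        have hcast : ((k - 1 - m : ℕ) : ℤ) = (k:ℤ) - 1 - m := by omega
        rw [hcast]; ring
      rw [← zpow_natCast P m, ← zpow_natCast P (k - 1 - m), ← zpow_add₀ hp0.ne',
        ← zpow_add₀ hp0.ne', hj, zpow_zero]
    rw [Eu_eq_zero hp0 hp1 hone, mul_zero]
  have hbm : ∀ m : ℕ, |Em P m * c ^ m * Eu P (P ^ ((1:ℤ) - k) * P ^ m)|
      ≤ (δp⁻¹ * K0) * (P ^ tri m * c ^ m) := by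
    intro m
    rcases lt_or_ge m k with hm | hm
    · rw [hvan m hm, abs_zero]
      positivity
    · have hEm := Em_abs_le hp0 hp1 hδp hδple m
      have harg : P ^ ((1:ℤ) - k) * P ^ m = P ^ (m + 1 - k : ℕ) := by
        rw [← zpow_natCast P m, ← zpow_add₀ hp0.ne', ← zpow_natCast P (m + 1 - k)]
        congr 1
        omega
      have hEuarg : |Eu P (P ^ ((1:ℤ) - k) * P ^ m)| ≤ K0 := by
        rw [harg]
        apply Eu_abs_le hp0 hp1
        rw [abs_of_nonneg (by positivity)]
        exact pow_le_one₀ hp0.le hp1.le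
      rw [abs_mul, abs_mul, abs_of_nonneg (pow_nonneg hc0.le m)]
      calc |Em P m| * c ^ m * |Eu P (P ^ ((1:ℤ) - k) * P ^ m)|
          ≤ (δp⁻¹ * P ^ tri m) * c ^ m * K0 := by
            apply mul_le_mul (mul_le_mul_of_nonneg_right hEm (by positivity)) hEuarg
              (abs_nonneg _) (by positivity)
        _ = (δp⁻¹ * K0) * (P ^ tri m * c ^ m) := by ring
  have hsb : Summable (fun m : ℕ => Em P m * c ^ m * Eu P (P ^ ((1:ℤ) - k) * P ^ m)) :=
    summable_of_le_tri hp0 hp1 hc0.le hbm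
  have hfin0 : |∑' m : ℕ, Em P m * c ^ m * Eu P (P ^ ((1:ℤ) - k) * P ^ m)|
      ≤ ∑' m : ℕ, |Em P m * c ^ m * Eu P (P ^ ((1:ℤ) - k) * P ^ m)| := by
    have := norm_tsum_le_tsum_norm
      (f := fun m : ℕ => Em P m * c ^ m * Eu P (P ^ ((1:ℤ) - k) * P ^ m))
      (by simpa only [Real.norm_eq_abs] using hsb.abs)
    simpa only [Real.norm_eq_abs] using this
  have hsplit : ∑' m : ℕ, |Em P m * c ^ m * Eu P (P ^ ((1:ℤ) - k) * P ^ m)|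
      = ∑' i : ℕ, |Em P (i + k) * c ^ (i + k) * Eu P (P ^ ((1:ℤ) - k) * P ^ (i + k))| := by
    rw [← Summable.sum_add_tsum_nat_add k hsb.abs]
    have hzero : ∑ m ∈ Finset.range k,
        |Em P m * c ^ m * Eu P (P ^ ((1:ℤ) - k) * P ^ m)| = 0 := by
      apply Finset.sum_eq_zero
      intro m hm
      rw [hvan m (Finset.mem_range.mp hm), abs_zero]
    rw [hzero, zero_add]
  have htail : ∑' i : ℕ, |Em P (i + k) * c ^ (i + k) * Eu P (P ^ ((1:ℤ) - k) * P ^ (i + k))|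
      ≤ (δp⁻¹ * K0) * (P ^ tri k * c ^ k) * (1 - c)⁻¹ := by
    have hgeom : Summable (fun i : ℕ => c ^ i) := summable_geometric_of_lt_one hc0.le hc1
    have hb2 : ∀ i : ℕ, |Em P (i + k) * c ^ (i + k) * Eu P (P ^ ((1:ℤ) - k) * P ^ (i + k))|
        ≤ ((δp⁻¹ * K0) * (P ^ tri k * c ^ k)) * c ^ i := by
      intro i
      calc |Em P (i + k) * c ^ (i + k) * Eu P (P ^ ((1:ℤ) - k) * P ^ (i + k))|
          ≤ (δp⁻¹ * K0) * (P ^ tri (i + k) * c ^ (i + k)) := hbm (i + k)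
        _ ≤ ((δp⁻¹ * K0) * (P ^ tri k * c ^ k)) * c ^ i := by
            have ht : P ^ tri (i + k) ≤ P ^ tri k :=
              pow_le_pow_of_le_one hp0.le hp1.le (tri_mono (Nat.le_add_left k i))
            have hcc : c ^ (i + k) = c ^ k * c ^ i := by rw [pow_add]; ring
            rw [hcc]
            have hh : P ^ tri (i + k) * (c ^ k * c ^ i) ≤ P ^ tri k * (c ^ k * c ^ i) :=
              mul_le_mul_of_nonneg_right ht (by positivity)
            calc (δp⁻¹ * K0) * (P ^ tri (i + k) * (c ^ k * c ^ i))
                ≤ (δp⁻¹ * K0) * (P ^ tri k * (c ^ k * c ^ i)) :=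
                  mul_le_mul_of_nonneg_left hh (by positivity)
              _ = ((δp⁻¹ * K0) * (P ^ tri k * c ^ k)) * c ^ i := by ring
    calc ∑' i : ℕ, |Em P (i + k) * c ^ (i + k) * Eu P (P ^ ((1:ℤ) - k) * P ^ (i + k))|
        ≤ ∑' i : ℕ, ((δp⁻¹ * K0) * (P ^ tri k * c ^ k)) * c ^ i := by
          apply Summable.tsum_le_tsum hb2 ((summable_nat_add_iff k).mpr hsb.abs) (hgeom.mul_left _)
      _ = ((δp⁻¹ * K0) * (P ^ tri k * c ^ k)) * (1 - c)⁻¹ := by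
          rw [tsum_mul_left, tsum_geometric_of_lt_one hc0.le hc1]
  have h6 : Eu P c * |jv q v ((q:ℝ) ^ (-(k:ℤ)))|
      ≤ (δp⁻¹ * K0) * (P ^ tri k * c ^ k) * (1 - c)⁻¹ := by
    have habsmul : Eu P c * |jv q v ((q:ℝ) ^ (-(k:ℤ)))|
        = |Eu P c * jv q v ((q:ℝ) ^ (-(k:ℤ)))| := by
      rw [abs_mul, abs_of_pos hEuc]
    rw [habsmul, h1]
    calc |∑' n : ℕ, Em P n * c ^ n * Eu P (P ^ ((1:ℤ) - k) * P ^ n)|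
        ≤ ∑' m : ℕ, |Em P m * c ^ m * Eu P (P ^ ((1:ℤ) - k) * P ^ m)| := hfin0
      _ = ∑' i : ℕ, |Em P (i + k) * c ^ (i + k) * Eu P (P ^ ((1:ℤ) - k) * P ^ (i + k))| := hsplit
      _ ≤ (δp⁻¹ * K0) * (P ^ tri k * c ^ k) * (1 - c)⁻¹ := htail
  have hPtri : P ^ tri k ≤ q ^ k * (P ^ (N * N))⁻¹ := by
    have h2 : P ^ (tri k + N * N) ≤ P ^ (N * k) :=
      pow_le_pow_of_le_one hp0.le hp1.le (mul_le_tri N k)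
    have h4 : (P ^ N) ^ k ≤ q ^ k := pow_le_pow_left₀ (pow_nonneg hp0.le N) hN.le k
    have h5 : P ^ tri k * P ^ (N * N) ≤ q ^ k := by
      rw [← pow_add]
      calc P ^ (tri k + N * N) ≤ P ^ (N * k) := h2
        _ = (P ^ N) ^ k := by rw [pow_mul]
        _ ≤ q ^ k := h4
    have hPNN : (0:ℝ) < P ^ (N * N) := pow_pos hp0 _
    calc P ^ tri k = (P ^ tri k * P ^ (N * N)) * (P ^ (N * N))⁻¹ := by field_simp
      _ ≤ q ^ k * (P ^ (N * N))⁻¹ := mul_le_mul_of_nonneg_right h5 (by positivity)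
  have h7 : |jv q v ((q:ℝ) ^ (-(k:ℤ)))|
      ≤ (Eu P c)⁻¹ * ((δp⁻¹ * K0) * (P ^ tri k * c ^ k) * (1 - c)⁻¹) := by
    have heq : |jv q v ((q:ℝ) ^ (-(k:ℤ)))|
        = (Eu P c)⁻¹ * (Eu P c * |jv q v ((q:ℝ) ^ (-(k:ℤ)))|) := by
      field_simp
    rw [heq]
    exact mul_le_mul_of_nonneg_left h6 (by positivity)
  calc |jv q v ((q:ℝ) ^ (-(k:ℤ)))|
      ≤ (Eu P c)⁻¹ * ((δp⁻¹ * K0) * (P ^ tri k * c ^ k) * (1 - c)⁻¹) := h7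
    _ ≤ (Eu P c)⁻¹ * ((δp⁻¹ * K0) * ((q ^ k * (P ^ (N * N))⁻¹) * c ^ k) * (1 - c)⁻¹) := by
        apply mul_le_mul_of_nonneg_left _ (by positivity)
        apply mul_le_mul_of_nonneg_right _ (by positivity)
        apply mul_le_mul_of_nonneg_left _ (by positivity)
        exact mul_le_mul_of_nonneg_right hPtri (by positivity)
    _ = C * (q * c) ^ k := by
        rw [hCdef, mul_pow]
        ring
end Decay
section Bound

open Finset Filter

variable {q v : ℝ}

lemma jv_bound (hq : 0 < q) (hq1 : q < 1) (hv : -1 < v) :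
    ∃ M > 0, ∀ n : ℤ, |jv q v ((q:ℝ) ^ n)| ≤ M := by
  obtain ⟨M0, hM0, hM0le⟩ := jv_small hq hq1 hv
  obtain ⟨C, hC, hCle⟩ := jv_decay hq hq1 hv
  refine ⟨max M0 C, lt_max_of_lt_left hM0, fun n => ?_⟩
  rcases n with k | k
  · refine le_trans (hM0le _ ?_) (le_max_left _ _)
    have h0 : (q:ℝ) ^ (Int.ofNat k) = q ^ k := zpow_natCast q k
    rw [h0]
    have h1 : q ^ k ≤ 1 := pow_le_one₀ hq.le hq1.le
    have h2 : (0:ℝ) ≤ q ^ k := pow_nonneg hq.le k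
    nlinarith
  · have heq : (q:ℝ) ^ (Int.negSucc k) = (q:ℝ) ^ (-((k + 1 : ℕ) : ℤ)) := by
      congr 1
    rw [heq]
    refine le_trans (hCle (k + 1)) (le_trans ?_ (le_max_right M0 C))
    have hc0 : (0:ℝ) < q ^ (2 * v + 2) := hc0' hq
    have hc1 : q ^ (2 * v + 2) < 1 := hc1' hq hq1 hv
    have hqc0 : (0:ℝ) ≤ q * q ^ (2 * v + 2) := by positivity
    have hqc1 : q * q ^ (2 * v + 2) ≤ 1 := by nlinarith
    have hp1 : (q * q ^ (2 * v + 2)) ^ (k + 1) ≤ 1 := pow_le_one₀ hqc0 hqc1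
    have hp0 : (0:ℝ) ≤ (q * q ^ (2 * v + 2)) ^ (k + 1) := pow_nonneg hqc0 _
    nlinarith

lemma summable_c_jv (hq : 0 < q) (hq1 : q < 1) (hv : -1 < v) (a : ℤ) :
    Summable (fun n : ℤ => (q ^ (2 * v + 2)) ^ n * |jv q v ((q:ℝ) ^ (a + n))|) := by
  obtain ⟨M, hM, hMle⟩ := jv_bound hq hq1 hv
  obtain ⟨C, hC, hCle⟩ := jv_decay hq hq1 hv
  have hc0 : (0:ℝ) < q ^ (2 * v + 2) := hc0' hq
  have hc1 : q ^ (2 * v + 2) < 1 := hc1' hq hq1 hv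
  set c : ℝ := q ^ (2 * v + 2) with hcdef
  have SF : Summable (fun t : ℤ => c ^ t * |jv q v ((q:ℝ) ^ t)|) := by
    apply Summable.of_nat_of_neg_add_one
    · apply Summable.of_nonneg_of_le (fun k => by positivity)
        (g := fun k : ℕ => c ^ (k:ℤ) * |jv q v ((q:ℝ) ^ (k:ℤ))|) _
        (((summable_geometric_of_lt_one hc0.le hc1)).mul_left M)
      intro k
      show c ^ (k:ℤ) * |jv q v ((q:ℝ) ^ (k:ℤ))| ≤ M * c ^ k
      rw [zpow_natCast]
      calc c ^ k * |jv q v ((q:ℝ) ^ (k:ℤ))| ≤ c ^ k * M :=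
            mul_le_mul_of_nonneg_left (hMle _) (by positivity)
        _ = M * c ^ k := mul_comm _ _
    · apply Summable.of_nonneg_of_le (fun k => by positivity)
        (g := fun k : ℕ => c ^ (-((k:ℤ) + 1)) * |jv q v ((q:ℝ) ^ (-((k:ℤ) + 1)))|) _
        ((summable_geometric_of_lt_one hq.le hq1).mul_left (C * q))
      intro k
      show c ^ (-((k:ℤ) + 1)) * |jv q v ((q:ℝ) ^ (-((k:ℤ) + 1)))| ≤ C * q * q ^ k
      have hkk : (-((k:ℤ) + 1)) = -(((k + 1 : ℕ)):ℤ) := by push_cast; ring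
      rw [hkk]
      have hd := hCle (k + 1)
      have hnn : (0:ℝ) ≤ c ^ (-(((k + 1 : ℕ)):ℤ)) := by positivity
      have hcne : c ^ (k + 1) ≠ 0 := by positivity
      calc c ^ (-(((k + 1 : ℕ)):ℤ)) * |jv q v ((q:ℝ) ^ (-(((k + 1 : ℕ)):ℤ)))|
          ≤ c ^ (-(((k + 1 : ℕ)):ℤ)) * (C * (q * c) ^ (k + 1)) :=
            mul_le_mul_of_nonneg_left hd hnn
        _ = C * q * q ^ k := by
            rw [mul_pow, zpow_neg, zpow_natCast]
            field_simp
            ring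
  have hcomp : Summable (fun n : ℤ => c ^ (a + n) * |jv q v ((q:ℝ) ^ (a + n))|) := by
    have h := (Equiv.addLeft a).summable_iff
      (f := fun t : ℤ => c ^ t * |jv q v ((q:ℝ) ^ t)|)
    exact h.mpr SF
  apply Summable.congr (hcomp.mul_left (c ^ (-a)))
  intro n
  rw [← mul_assoc, ← zpow_add₀ hc0.ne', show -a + (a + n) = n by ring]

lemma wgt (hq : 0 < q) (v : ℝ) (n : ℤ) :
    (q:ℝ) ^ n * ((q:ℝ) ^ n) ^ (2 * v + 1) = (q ^ (2 * v + 2)) ^ n := by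
  have h1 : ((q:ℝ) ^ n) ^ (2 * v + 1) = q ^ ((n:ℝ) * (2 * v + 1)) := by
    rw [← Real.rpow_intCast q n, ← Real.rpow_mul hq.le]
  have h2 : (q ^ (2 * v + 2)) ^ n = q ^ ((2 * v + 2) * (n:ℝ)) := by
    rw [← Real.rpow_intCast (q ^ (2 * v + 2)) n, ← Real.rpow_mul hq.le]
  have h3 : (q:ℝ) ^ n = q ^ ((n:ℝ)) := (Real.rpow_intCast q n).symm
  rw [h1, h2, h3, ← Real.rpow_add hq]
  congr 1
  ring

end Bound

end QB7
open QB7 in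
/-- for `f ∈ L_{q,1,v}` the q-translation is well defined and is given by the
kernel `D_v`. -/
theorem Tqv_welldefined_kernel (q v : ℝ) (hq : 0 < q) (hq1 : q < 1) (hv : -1 < v)
    (f : ℝ → ℝ) (hf : MemLqpv q v 1 f) :
    ∀ x ∈ Rq q, ∀ y ∈ Rq q,
      JacksonSummable q
          (fun t => Fqv q v f t * jv q v (y * t) * jv q v (x * t) * t ^ (2 * v + 1)) ∧
      Tqv q v x f y = jackson q (fun z => f z * Dv q v x y z * z ^ (2 * v + 1)) := by
  intro x hx y hy
  obtain ⟨a, rfl⟩ := hx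
  obtain ⟨b, rfl⟩ := hy
  have hq0 : (q:ℝ) ≠ 0 := hq.ne'
  have hc0 : (0:ℝ) < q ^ (2 * v + 2) := hc0' hq
  have hc1 : q ^ (2 * v + 2) < 1 := hc1' hq hq1 hv
  -- the L¹ hypothesis, rewritten
  have hfW : Summable (fun m : ℤ => (q ^ (2 * v + 2)) ^ m * |f ((q:ℝ) ^ m)|) := by
    have hf' : Summable fun n : ℤ =>
        (q:ℝ) ^ n * |(|f ((q:ℝ) ^ n)| ^ (1:ℝ) * ((q:ℝ) ^ n) ^ (2 * v + 1))| := hf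
    apply hf'.congr
    intro m
    have hw : (0:ℝ) < ((q:ℝ) ^ m) ^ (2 * v + 1 : ℝ) :=
      Real.rpow_pos_of_pos (zpow_pos hq m) _
    rw [Real.rpow_one, abs_mul, abs_abs, abs_of_pos hw,
      show (q:ℝ) ^ m * (|f ((q:ℝ) ^ m)| * ((q:ℝ) ^ m) ^ (2 * v + 1))
          = ((q:ℝ) ^ m * ((q:ℝ) ^ m) ^ (2 * v + 1)) * |f ((q:ℝ) ^ m)| from by ring,
      wgt hq v m]
  -- the double-series kernel
  set plain : ℤ → ℤ → ℝ := fun n m =>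
    ((q:ℝ) ^ n * ((q:ℝ) ^ n) ^ (2 * v + 1)) * ((q:ℝ) ^ m * ((q:ℝ) ^ m) ^ (2 * v + 1))
      * f ((q:ℝ) ^ m) * jv q v ((q:ℝ) ^ n * (q:ℝ) ^ m)
      * jv q v ((q:ℝ) ^ b * (q:ℝ) ^ n) * jv q v ((q:ℝ) ^ a * (q:ℝ) ^ n) with hplaindef
  obtain ⟨M, hM, hMle⟩ := jv_bound hq hq1 hv
  have hwabs : ∀ t : ℤ, |(q:ℝ) ^ t * ((q:ℝ) ^ t) ^ (2 * v + 1)| = (q ^ (2 * v + 2)) ^ t := by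
    intro t
    rw [abs_of_pos (mul_pos (zpow_pos hq t) (Real.rpow_pos_of_pos (zpow_pos hq t) _)),
      wgt hq v t]
  have habs_eq : ∀ n m : ℤ, |plain n m|
      = (q ^ (2 * v + 2)) ^ n * (q ^ (2 * v + 2)) ^ m * |f ((q:ℝ) ^ m)|
        * |jv q v ((q:ℝ) ^ (n + m))| * |jv q v ((q:ℝ) ^ (b + n))|
        * |jv q v ((q:ℝ) ^ (a + n))| := by
    intro n m
    have e1 : (q:ℝ) ^ n * (q:ℝ) ^ m = (q:ℝ) ^ (n + m) := (zpow_add₀ hq0 n m).symm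
    have e2 : (q:ℝ) ^ b * (q:ℝ) ^ n = (q:ℝ) ^ (b + n) := (zpow_add₀ hq0 b n).symm
    have e3 : (q:ℝ) ^ a * (q:ℝ) ^ n = (q:ℝ) ^ (a + n) := (zpow_add₀ hq0 a n).symm
    simp only [hplaindef]
    rw [e1, e2, e3, abs_mul, abs_mul, abs_mul, abs_mul, abs_mul, hwabs n, hwabs m]
  have habs_le : ∀ n m : ℤ, |plain n m|
      ≤ M * (((q ^ (2 * v + 2)) ^ n * |jv q v ((q:ℝ) ^ (a + n))| * |jv q v ((q:ℝ) ^ (b + n))|)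
          * ((q ^ (2 * v + 2)) ^ m * |f ((q:ℝ) ^ m)|)) := by
    intro n m
    rw [habs_eq n m]
    have hb1 : |jv q v ((q:ℝ) ^ (n + m))| ≤ M := hMle _
    have hnn : (0:ℝ) ≤ (q ^ (2 * v + 2)) ^ n * (q ^ (2 * v + 2)) ^ m * |f ((q:ℝ) ^ m)|
        * |jv q v ((q:ℝ) ^ (b + n))| * |jv q v ((q:ℝ) ^ (a + n))| := by positivity
    calc (q ^ (2 * v + 2)) ^ n * (q ^ (2 * v + 2)) ^ m * |f ((q:ℝ) ^ m)|
          * |jv q v ((q:ℝ) ^ (n + m))| * |jv q v ((q:ℝ) ^ (b + n))| * |jv q v ((q:ℝ) ^ (a + n))|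
        = ((q ^ (2 * v + 2)) ^ n * (q ^ (2 * v + 2)) ^ m * |f ((q:ℝ) ^ m)|
            * |jv q v ((q:ℝ) ^ (b + n))| * |jv q v ((q:ℝ) ^ (a + n))|)
          * |jv q v ((q:ℝ) ^ (n + m))| := by ring
      _ ≤ ((q ^ (2 * v + 2)) ^ n * (q ^ (2 * v + 2)) ^ m * |f ((q:ℝ) ^ m)|
            * |jv q v ((q:ℝ) ^ (b + n))| * |jv q v ((q:ℝ) ^ (a + n))|) * M :=
          mul_le_mul_of_nonneg_left hb1 hnn
      _ = M * (((q ^ (2 * v + 2)) ^ n * |jv q v ((q:ℝ) ^ (a + n))|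
            * |jv q v ((q:ℝ) ^ (b + n))|) * ((q ^ (2 * v + 2)) ^ m * |f ((q:ℝ) ^ m)|)) := by
          ring
  have hSa := summable_c_jv hq hq1 hv a
  have hU : Summable (fun n : ℤ => (q ^ (2 * v + 2)) ^ n * |jv q v ((q:ℝ) ^ (a + n))|
      * |jv q v ((q:ℝ) ^ (b + n))|) := by
    apply Summable.of_nonneg_of_le (fun n => by positivity) _ (hSa.mul_left M)
    intro n
    calc (q ^ (2 * v + 2)) ^ n * |jv q v ((q:ℝ) ^ (a + n))| * |jv q v ((q:ℝ) ^ (b + n))|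
        ≤ (q ^ (2 * v + 2)) ^ n * |jv q v ((q:ℝ) ^ (a + n))| * M :=
          mul_le_mul_of_nonneg_left (hMle _) (by positivity)
      _ = M * ((q ^ (2 * v + 2)) ^ n * |jv q v ((q:ℝ) ^ (a + n))|) := by ring
  have hprod : Summable (fun nm : ℤ × ℤ =>
      ((q ^ (2 * v + 2)) ^ nm.1 * |jv q v ((q:ℝ) ^ (a + nm.1))|
        * |jv q v ((q:ℝ) ^ (b + nm.1))|)
      * ((q ^ (2 * v + 2)) ^ nm.2 * |f ((q:ℝ) ^ nm.2)|)) :=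
    hU.mul_of_nonneg hfW (fun n => by positivity) (fun m => by positivity)
  have habs : Summable (fun nm : ℤ × ℤ => |plain nm.1 nm.2|) :=
    Summable.of_nonneg_of_le (fun nm => abs_nonneg _) (fun nm => habs_le nm.1 nm.2)
      (hprod.mul_left M)
  have hsplain : Summable (fun nm : ℤ × ℤ => plain nm.1 nm.2) := habs.of_abs
  have hfib1 : ∀ n : ℤ, Summable (fun m : ℤ => plain n m) := fun n => hsplain.prod_factor n
  have hfib2 : ∀ m : ℤ, Summable (fun n : ℤ => plain n m) := fun m =>
    hsplain.prod_symm.prod_factor m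
  have hfib1abs : ∀ n : ℤ, Summable (fun m : ℤ => |plain n m|) := fun n => habs.prod_factor n
  -- expansion of the summand of Tqv
  have E1 : ∀ n : ℤ, (q:ℝ) ^ n * (Fqv q v f ((q:ℝ) ^ n) * jv q v ((q:ℝ) ^ b * (q:ℝ) ^ n)
        * jv q v ((q:ℝ) ^ a * (q:ℝ) ^ n) * ((q:ℝ) ^ n) ^ (2 * v + 1))
      = cqv q v * (1 - q) * ∑' m : ℤ, plain n m := by
    intro n
    have hF : Fqv q v f ((q:ℝ) ^ n) = cqv q v * ((1 - q) * ∑' m : ℤ, (q:ℝ) ^ m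
        * (f ((q:ℝ) ^ m) * jv q v ((q:ℝ) ^ n * (q:ℝ) ^ m) * ((q:ℝ) ^ m) ^ (2 * v + 1))) := rfl
    have hpull : (∑' m : ℤ, plain n m)
        = ((q:ℝ) ^ n * ((q:ℝ) ^ n) ^ (2 * v + 1) * jv q v ((q:ℝ) ^ b * (q:ℝ) ^ n)
            * jv q v ((q:ℝ) ^ a * (q:ℝ) ^ n))
          * ∑' m : ℤ, (q:ℝ) ^ m
            * (f ((q:ℝ) ^ m) * jv q v ((q:ℝ) ^ n * (q:ℝ) ^ m) * ((q:ℝ) ^ m) ^ (2 * v + 1)) := by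
      rw [← tsum_mul_left]
      apply tsum_congr
      intro m
      simp only [hplaindef]
      ring
    rw [hF, hpull]
    ring
  -- expansion of the summand of the kernel side
  have E2 : ∀ m : ℤ, (q:ℝ) ^ m * (f ((q:ℝ) ^ m)
        * Dv q v ((q:ℝ) ^ a) ((q:ℝ) ^ b) ((q:ℝ) ^ m) * ((q:ℝ) ^ m) ^ (2 * v + 1))
      = cqv q v ^ (2:ℕ) * (1 - q) * ∑' n : ℤ, plain n m := by
    intro m
    have hD : Dv q v ((q:ℝ) ^ a) ((q:ℝ) ^ b) ((q:ℝ) ^ m) = cqv q v ^ (2:ℕ)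
        * ((1 - q) * ∑' n : ℤ, (q:ℝ) ^ n * (jv q v ((q:ℝ) ^ a * (q:ℝ) ^ n)
          * jv q v ((q:ℝ) ^ b * (q:ℝ) ^ n) * jv q v ((q:ℝ) ^ m * (q:ℝ) ^ n)
          * ((q:ℝ) ^ n) ^ (2 * v + 1))) := rfl
    have hpull : (∑' n : ℤ, plain n m)
        = ((q:ℝ) ^ m * ((q:ℝ) ^ m) ^ (2 * v + 1) * f ((q:ℝ) ^ m))
          * ∑' n : ℤ, (q:ℝ) ^ n * (jv q v ((q:ℝ) ^ a * (q:ℝ) ^ n)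
            * jv q v ((q:ℝ) ^ b * (q:ℝ) ^ n) * jv q v ((q:ℝ) ^ m * (q:ℝ) ^ n)
            * ((q:ℝ) ^ n) ^ (2 * v + 1)) := by
      rw [← tsum_mul_left]
      apply tsum_congr
      intro n
      simp only [hplaindef]
      rw [show (q:ℝ) ^ n * (q:ℝ) ^ m = (q:ℝ) ^ m * (q:ℝ) ^ n from mul_comm _ _]
      ring
    rw [hD, hpull]
    ring
  constructor
  · -- summability
    show Summable fun n : ℤ => (q:ℝ) ^ n * |Fqv q v f ((q:ℝ) ^ n)
      * jv q v ((q:ℝ) ^ b * (q:ℝ) ^ n) * jv q v ((q:ℝ) ^ a * (q:ℝ) ^ n)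
      * ((q:ℝ) ^ n) ^ (2 * v + 1)|
    have hg : Summable (fun n : ℤ => ∑' m : ℤ, |plain n m|) :=
      (habs.hasSum.prod_fiberwise (fun n => (hfib1abs n).hasSum)).summable
    apply Summable.of_nonneg_of_le (fun n => by positivity) _
      (hg.mul_left |cqv q v * (1 - q)|)
    intro n
    have h1 : (q:ℝ) ^ n * |Fqv q v f ((q:ℝ) ^ n) * jv q v ((q:ℝ) ^ b * (q:ℝ) ^ n)
        * jv q v ((q:ℝ) ^ a * (q:ℝ) ^ n) * ((q:ℝ) ^ n) ^ (2 * v + 1)|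
        = |cqv q v * (1 - q) * ∑' m : ℤ, plain n m| := by
      rw [← E1 n]
      have habsmul := abs_mul ((q:ℝ) ^ n) (Fqv q v f ((q:ℝ) ^ n)
        * jv q v ((q:ℝ) ^ b * (q:ℝ) ^ n) * jv q v ((q:ℝ) ^ a * (q:ℝ) ^ n)
        * ((q:ℝ) ^ n) ^ (2 * v + 1))
      rw [habsmul, abs_of_pos (zpow_pos hq n)]
    rw [h1, abs_mul]
    have h2 : |∑' m : ℤ, plain n m| ≤ ∑' m : ℤ, |plain n m| := by
      have := norm_tsum_le_tsum_norm (f := fun m : ℤ => plain n m)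
        (by simpa only [Real.norm_eq_abs] using hfib1abs n)
      simpa only [Real.norm_eq_abs] using this
    exact mul_le_mul_of_nonneg_left h2 (abs_nonneg _)
  · -- the identity
    show Tqv q v ((q:ℝ) ^ a) f ((q:ℝ) ^ b)
      = jackson q fun z => f z * Dv q v ((q:ℝ) ^ a) ((q:ℝ) ^ b) z * z ^ (2 * v + 1)
    have hT : Tqv q v ((q:ℝ) ^ a) f ((q:ℝ) ^ b) = cqv q v * ((1 - q)
        * ∑' n : ℤ, (q:ℝ) ^ n * (Fqv q v f ((q:ℝ) ^ n) * jv q v ((q:ℝ) ^ b * (q:ℝ) ^ n)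
          * jv q v ((q:ℝ) ^ a * (q:ℝ) ^ n) * ((q:ℝ) ^ n) ^ (2 * v + 1))) := rfl
    have hJ : jackson q (fun z => f z * Dv q v ((q:ℝ) ^ a) ((q:ℝ) ^ b) z * z ^ (2 * v + 1))
        = (1 - q) * ∑' m : ℤ, (q:ℝ) ^ m * (f ((q:ℝ) ^ m)
          * Dv q v ((q:ℝ) ^ a) ((q:ℝ) ^ b) ((q:ℝ) ^ m) * ((q:ℝ) ^ m) ^ (2 * v + 1)) := rfl
    rw [hT, hJ, show (∑' n : ℤ, (q:ℝ) ^ n * (Fqv q v f ((q:ℝ) ^ n)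
        * jv q v ((q:ℝ) ^ b * (q:ℝ) ^ n) * jv q v ((q:ℝ) ^ a * (q:ℝ) ^ n)
        * ((q:ℝ) ^ n) ^ (2 * v + 1)))
      = ∑' n : ℤ, (cqv q v * (1 - q) * ∑' m : ℤ, plain n m) from tsum_congr E1,
      show (∑' m : ℤ, (q:ℝ) ^ m * (f ((q:ℝ) ^ m)
          * Dv q v ((q:ℝ) ^ a) ((q:ℝ) ^ b) ((q:ℝ) ^ m) * ((q:ℝ) ^ m) ^ (2 * v + 1)))
        = ∑' m : ℤ, (cqv q v ^ (2:ℕ) * (1 - q) * ∑' n : ℤ, plain n m) from tsum_congr E2,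
      tsum_mul_left, tsum_mul_left]
    have hcomm : ∑' (m : ℤ) (n : ℤ), plain n m = ∑' (n : ℤ) (m : ℤ), plain n m :=
      Summable.tsum_comm' (f := plain) hsplain hfib1 hfib2
    rw [← hcomm]
    ring
end
end
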